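/- arXiv:1307.2532 — 5 statements merged into one kernel-verified Lean document; each statement's English description precedes it below -/
import Mathlib

section
/- Let W be a Möbius transformation and let W̃ be a holomorphic function on a domain Ω ⊂ ℂ satisfying exp(i·W̃(z)) = W(exp(i·z)) for all z ∈ Ω. Then for any z, w ∈ Ω with z − w not a multiple of 2π and W̃(z) − W̃(w) not a multiple of 2π, one has W̃'(z)·cot((W̃(z) − W̃(w))/2) − cot((z − w)/2) = W̃''(z)/W̃'(z). -/
set_option maxHeartbeats 1000000

open Complex

lemma cot_half_eq (s : ℂ) (h : ∀ n : ℤ, s ≠ ((2 * Real.pi * n : ℝ) : ℂ)) :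
    Complex.cot (s / 2) = Complex.I * (Complex.exp (Complex.I * s) + 1)
      / (Complex.exp (Complex.I * s) - 1) := by
  have hsin : Complex.sin (s / 2) ≠ 0 := by
    intro hzero
    obtain ⟨k, hk⟩ := Complex.sin_eq_zero_iff.mp hzero
    refine h k ?_
    have : s = 2 * (s / 2) := by ring
    rw [this, hk]; push_cast; ring
  have hexp : Complex.exp (Complex.I * s) ≠ 1 := by
    intro hone
    obtain ⟨n, hn⟩ := Complex.exp_eq_one_iff.mp hone
    refine h n ?_
    have hI : (Complex.I : ℂ) ≠ 0 := Complex.I_ne_zero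
    have hs : s = n * (2 * (Real.pi : ℂ)) := by
      apply mul_left_cancel₀ hI
      rw [hn]; ring
    rw [hs]; push_cast; ring
  have he : Complex.exp (Complex.I * s) = Complex.exp (s / 2 * Complex.I) ^ 2 := by
    rw [← Complex.exp_nat_mul]; ring_nf
  have hene : Complex.exp (s / 2 * Complex.I) ≠ 0 := Complex.exp_ne_zero _
  have hsub : Complex.exp (Complex.I * s) - 1 ≠ 0 := sub_ne_zero.mpr hexp
  rw [Complex.cot_eq_cos_div_sin]
  rw [he] at hsub ⊢
  rw [Complex.sin, Complex.cos, neg_mul, Complex.exp_neg] at *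
  generalize hE : Complex.exp (s / 2 * Complex.I) = e at *
  have hsin' : (e⁻¹ - e) * Complex.I / 2 ≠ 0 := hsin
  rw [div_eq_div_iff hsin' hsub]
  field_simp
  linear_combination (-(e * e + 1) * (1 - e * e)) * Complex.I_sq

lemma exp_I_hasDerivAt (z : ℂ) :
    HasDerivAt (fun x : ℂ => Complex.exp (Complex.I * x))
      (Complex.exp (Complex.I * z) * Complex.I) z := by
  simpa using ((hasDerivAt_id z).const_mul Complex.I).cexp

lemma exp_ne_one_of_ne (s : ℂ) (h : ∀ n : ℤ, s ≠ ((2 * Real.pi * n : ℝ) : ℂ)) :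
    Complex.exp (Complex.I * s) ≠ 1 := by
  intro hone
  obtain ⟨n, hn⟩ := Complex.exp_eq_one_iff.mp hone
  refine h n ?_
  have hs : s = n * (2 * (Real.pi : ℂ)) := by
    apply mul_left_cancel₀ Complex.I_ne_zero
    rw [hn]; ring
  rw [hs]; push_cast; ring

lemma mobius_deriv_formula (a b c d : ℂ)
    (Ω : Set ℂ) (hΩ : IsOpen Ω) (Wt : ℂ → ℂ)
    (hWt : DifferentiableOn ℂ Wt Ω)
    (hlift : ∀ x ∈ Ω, Complex.exp (Complex.I * Wt x)
      = (a * Complex.exp (Complex.I * x) + b) / (c * Complex.exp (Complex.I * x) + d))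
    (z : ℂ) (hz : z ∈ Ω)
    (hnum : a * Complex.exp (Complex.I * z) + b ≠ 0)
    (hden : c * Complex.exp (Complex.I * z) + d ≠ 0) :
    deriv Wt z = (a * d - b * c) * Complex.exp (Complex.I * z)
      / ((a * Complex.exp (Complex.I * z) + b) * (c * Complex.exp (Complex.I * z) + d)) := by
  set u := Complex.exp (Complex.I * z) with hu
  have hdiff : DifferentiableAt ℂ Wt z := hWt.differentiableAt (hΩ.mem_nhds hz)
  have hW' : HasDerivAt Wt (deriv Wt z) z := hdiff.hasDerivAt
  have hF : HasDerivAt (fun x => Complex.exp (Complex.I * Wt x))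
      (Complex.exp (Complex.I * Wt z) * (Complex.I * deriv Wt z)) z :=
    (hW'.const_mul Complex.I).cexp
  have hN : HasDerivAt (fun x => a * Complex.exp (Complex.I * x) + b) (a * (u * Complex.I)) z :=
    (((exp_I_hasDerivAt z)).const_mul a).add_const b
  have hD : HasDerivAt (fun x => c * Complex.exp (Complex.I * x) + d) (c * (u * Complex.I)) z :=
    (((exp_I_hasDerivAt z)).const_mul c).add_const d
  have hG : HasDerivAt (fun x => (a * Complex.exp (Complex.I * x) + b)
      / (c * Complex.exp (Complex.I * x) + d))
      ((a * (u * Complex.I) * (c * u + d) - (a * u + b) * (c * (u * Complex.I)))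
        / (c * u + d) ^ 2) z := hN.div hD hden
  have heq : (fun x => Complex.exp (Complex.I * Wt x)) =ᶠ[nhds z]
      (fun x => (a * Complex.exp (Complex.I * x) + b) / (c * Complex.exp (Complex.I * x) + d)) := by
    filter_upwards [hΩ.mem_nhds hz] with x hx using hlift x hx
  have hF' : HasDerivAt (fun x => Complex.exp (Complex.I * Wt x))
      ((a * (u * Complex.I) * (c * u + d) - (a * u + b) * (c * (u * Complex.I)))
        / (c * u + d) ^ 2) z := hG.congr_of_eventuallyEq heq
  have hkey := hF.unique hF'
  rw [hlift z hz, ← hu] at hkey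
  rw [div_mul_eq_mul_div, div_eq_div_iff hden (pow_ne_zero 2 hden)] at hkey
  rw [eq_div_iff (mul_ne_zero hnum hden)]
  refine mul_right_cancel₀ (mul_ne_zero Complex.I_ne_zero hden) ?_
  linear_combination hkey

/-- Covering version of the Möbius identity: if `W̃` is holomorphic on a domain `Ω` and satisfies
`exp(i W̃ z) = W (exp (i z))` for a Möbius transformation `W`, then for `z, w ∈ Ω` with
`z − w ∉ 2πℤ` and `W̃ z − W̃ w ∉ 2πℤ`,
`W̃'(z) · cot((W̃ z − W̃ w)/2) − cot((z−w)/2) = W̃''(z)/W̃'(z)`. -/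
theorem mobius_cot_identity_radial
    (a b c d : ℂ) (hdet : a * d - b * c ≠ 0)
    (W : ℂ → ℂ) (hW : ∀ z, W z = (a * z + b) / (c * z + d))
    (Ω : Set ℂ) (hΩ : IsOpen Ω) (Wt : ℂ → ℂ)
    (hWt : DifferentiableOn ℂ Wt Ω)
    (hlift : ∀ z ∈ Ω, Complex.exp (Complex.I * Wt z) = W (Complex.exp (Complex.I * z)))
    (z w : ℂ) (hzΩ : z ∈ Ω) (hwΩ : w ∈ Ω)
    (h1 : ∀ n : ℤ, z - w ≠ ((2 * Real.pi * n : ℝ) : ℂ))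
    (h2 : ∀ n : ℤ, Wt z - Wt w ≠ ((2 * Real.pi * n : ℝ) : ℂ)) :
    deriv Wt z * Complex.cot ((Wt z - Wt w) / 2) - Complex.cot ((z - w) / 2)
      = deriv (deriv Wt) z / deriv Wt z := by
  have hlift' : ∀ x ∈ Ω, Complex.exp (Complex.I * Wt x)
      = (a * Complex.exp (Complex.I * x) + b) / (c * Complex.exp (Complex.I * x) + d) := by
    intro x hx; rw [hlift x hx, hW]
  -- nonvanishing of the linear factors on Ω
  have hnz : ∀ x ∈ Ω, a * Complex.exp (Complex.I * x) + b ≠ 0 ∧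
      c * Complex.exp (Complex.I * x) + d ≠ 0 := by
    intro x hx
    have h0 : (a * Complex.exp (Complex.I * x) + b)
        / (c * Complex.exp (Complex.I * x) + d) ≠ 0 := by
      rw [← hlift' x hx]; exact Complex.exp_ne_zero _
    constructor
    · intro hq; rw [hq, zero_div] at h0; exact h0 rfl
    · intro hq; rw [hq, div_zero] at h0; exact h0 rfl
  set u := Complex.exp (Complex.I * z) with hu
  set v := Complex.exp (Complex.I * w) with hv
  obtain ⟨hau, hcu⟩ := hnz z hzΩ
  obtain ⟨hav, hcv⟩ := hnz w hwΩ
  rw [← hu] at hau hcu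
  rw [← hv] at hav hcv
  have hvne : v ≠ 0 := Complex.exp_ne_zero _
  -- u ≠ v
  have hFval : Complex.exp (Complex.I * (z - w)) = u / v := by
    rw [hu, hv, ← Complex.exp_sub]; ring_nf
  have hF1 : Complex.exp (Complex.I * (z - w)) ≠ 1 := exp_ne_one_of_ne _ h1
  have huv : u - v ≠ 0 := by
    intro hq
    apply hF1
    rw [hFval]
    rw [div_eq_one_iff_eq hvne]
    exact sub_eq_zero.mp hq
  -- E value
  have hEval : Complex.exp (Complex.I * (Wt z - Wt w))
      = ((a * u + b) * (c * v + d)) / ((c * u + d) * (a * v + b)) := by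
    have : Complex.I * (Wt z - Wt w) = Complex.I * Wt z - Complex.I * Wt w := by ring
    rw [this, Complex.exp_sub, hlift' z hzΩ, hlift' w hwΩ, ← hu, ← hv]
    field_simp
  have hE1 : Complex.exp (Complex.I * (Wt z - Wt w)) ≠ 1 := exp_ne_one_of_ne _ h2
  have hEs : Complex.exp (Complex.I * (Wt z - Wt w)) - 1 ≠ 0 := sub_ne_zero.mpr hE1
  have hFs : Complex.exp (Complex.I * (z - w)) - 1 ≠ 0 := sub_ne_zero.mpr hF1
  -- cotangent formulas
  have hcot1 := cot_half_eq (Wt z - Wt w) h2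
  have hcot2 := cot_half_eq (z - w) h1
  -- simplified cot expressions
  have hc1 : Complex.I * (Complex.exp (Complex.I * (Wt z - Wt w)) + 1)
      / (Complex.exp (Complex.I * (Wt z - Wt w)) - 1)
      = Complex.I * ((a * u + b) * (c * v + d) + (c * u + d) * (a * v + b))
        / ((a * d - b * c) * (u - v)) := by
    rw [hEval] at hEs ⊢
    rw [div_eq_div_iff hEs (mul_ne_zero hdet huv)]
    field_simp
    have hD : u * c + d ≠ 0 := by rw [mul_comm]; exact hcu
    have hX : (a * u + b) * (c * v + d) / (u * c + d) * (u * c + d) = (a * u + b) * (c * v + d) :=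
      div_mul_cancel₀ _ hD
    linear_combination (-2 * (a * v + b)) * hX
  have hc2 : Complex.I * (Complex.exp (Complex.I * (z - w)) + 1)
      / (Complex.exp (Complex.I * (z - w)) - 1)
      = Complex.I * (u + v) / (u - v) := by
    rw [hFval] at hFs ⊢
    rw [div_eq_div_iff hFs huv]
    field_simp
  -- first derivative
  have hdW : deriv Wt z = (a * d - b * c) * u / ((a * u + b) * (c * u + d)) :=
    mobius_deriv_formula a b c d Ω hΩ Wt hWt hlift' z hzΩ hau hcu
  have hdW0 : deriv Wt z ≠ 0 := by
    rw [hdW]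
    exact div_ne_zero (mul_ne_zero hdet (Complex.exp_ne_zero _)) (mul_ne_zero hau hcu)
  -- second derivative
  have hgev : deriv Wt =ᶠ[nhds z] (fun x => (a * d - b * c) * Complex.exp (Complex.I * x)
      / ((a * Complex.exp (Complex.I * x) + b) * (c * Complex.exp (Complex.I * x) + d))) := by
    filter_upwards [hΩ.mem_nhds hzΩ] with x hx
    exact mobius_deriv_formula a b c d Ω hΩ Wt hWt hlift' x hx (hnz x hx).1 (hnz x hx).2
  have hN : HasDerivAt (fun x => (a * d - b * c) * Complex.exp (Complex.I * x))
      ((a * d - b * c) * (u * Complex.I)) z := by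
    simpa using (exp_I_hasDerivAt z).const_mul (a * d - b * c)
  have hNa : HasDerivAt (fun x => a * Complex.exp (Complex.I * x) + b) (a * (u * Complex.I)) z :=
    ((exp_I_hasDerivAt z).const_mul a).add_const b
  have hNc : HasDerivAt (fun x => c * Complex.exp (Complex.I * x) + d) (c * (u * Complex.I)) z :=
    ((exp_I_hasDerivAt z).const_mul c).add_const d
  have hM : HasDerivAt (fun x => (a * Complex.exp (Complex.I * x) + b)
      * (c * Complex.exp (Complex.I * x) + d))
      (a * (u * Complex.I) * (c * u + d) + (a * u + b) * (c * (u * Complex.I))) z := hNa.mul hNc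
  have hg : HasDerivAt (fun x => (a * d - b * c) * Complex.exp (Complex.I * x)
      / ((a * Complex.exp (Complex.I * x) + b) * (c * Complex.exp (Complex.I * x) + d)))
      (((a * d - b * c) * (u * Complex.I) * ((a * u + b) * (c * u + d))
        - (a * d - b * c) * u * (a * (u * Complex.I) * (c * u + d)
          + (a * u + b) * (c * (u * Complex.I)))) / ((a * u + b) * (c * u + d)) ^ 2) z :=
    hN.div hM (mul_ne_zero hau hcu)
  have hddW : deriv (deriv Wt) z
      = ((a * d - b * c) * (u * Complex.I) * ((a * u + b) * (c * u + d))
        - (a * d - b * c) * u * (a * (u * Complex.I) * (c * u + d)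
          + (a * u + b) * (c * (u * Complex.I)))) / ((a * u + b) * (c * u + d)) ^ 2 := by
    rw [hgev.deriv_eq]
    exact hg.deriv
  -- clean form of the right-hand side
  have hRHS : deriv (deriv Wt) z / deriv Wt z
      = Complex.I * (b * d - a * c * u ^ 2) / ((a * u + b) * (c * u + d)) := by
    rw [hdW, hddW]
    have hM : (a * u + b) * (c * u + d) ≠ 0 := mul_ne_zero hau hcu
    have hune : u ≠ 0 := Complex.exp_ne_zero _
    field_simp
    ring
  -- final computation
  rw [hcot1, hcot2, hc1, hc2, hRHS, hdW]
  field_simp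
  ring
end

section
/- Let K₁ and K₂ be ℍ-hulls. Then (a) K₁ ⊂ K₁·K₂ and K₂ = (K₁·K₂)/K₁, and (b) the half-plane capacity is additive: hcap(K₁·K₂) = hcap(K₁) + hcap(K₂). -/
open Set Filter

/-- The open upper half-plane. -/
def UHalf : Set ℂ := {z : ℂ | 0 < z.im}

/-- `K` is an `ℍ`-hull: bounded, relatively closed in `ℍ`, with simply connected complement
`ℍ ∖ K`. -/
structure IsHHull (K : Set ℂ) : Prop where
  subset : K ⊆ UHalf
  bounded : Bornology.IsBounded K
  rel_closed : closure K ∩ UHalf = K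
  simply_connected : SimplyConnectedSpace (UHalf \ K : Set ℂ)

/-- `g` is the normalized Loewner map of the `ℍ`-hull `K`, with half-plane capacity `c`:
a conformal bijection of `ℍ ∖ K` onto `ℍ` with `g(z) = z + c/z + o(1/z)` at `∞`. -/
structure IsLoewnerMapOf (K : Set ℂ) (g : ℂ → ℂ) (c : ℝ) : Prop where
  diff : DifferentiableOn ℂ g (UHalf \ K)
  inj : InjOn g (UHalf \ K)
  image : g '' (UHalf \ K) = UHalf
  norm : Tendsto (fun z => z * (g z - z))
    ((Bornology.cobounded ℂ) ⊓ Filter.principal UHalf) (nhds (c : ℂ))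

namespace HullAux
open Complex Metric Bornology
noncomputable abbrev FF : Filter ℂ := (Bornology.cobounded ℂ) ⊓ Filter.principal UHalf
lemma isOpen_uHalf : IsOpen UHalf := isOpen_lt continuous_const Complex.continuous_im

lemma eventually_cobounded_iff {p : ℂ → Prop} :
    (∀ᶠ z in Bornology.cobounded ℂ, p z) ↔ ∃ R : ℝ, ∀ z : ℂ, R ≤ ‖z‖ → p z := by
  rw [← comap_norm_atTop, eventually_comap]
  constructor
  · rintro h
    rcases (eventually_atTop).1 h with ⟨R, hR⟩
    exact ⟨R, fun z hz => hR ‖z‖ hz z rfl⟩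
  · rintro ⟨R, hR⟩
    filter_upwards [eventually_ge_atTop R] with t ht z hz
    exact hR z (hz ▸ ht)

lemma eventually_FF_iff {p : ℂ → Prop} :
    (∀ᶠ z in FF, p z) ↔ ∃ R : ℝ, ∀ z ∈ UHalf, R ≤ ‖z‖ → p z := by
  rw [eventually_inf_principal]
  rw [eventually_cobounded_iff]
  exact ⟨fun ⟨R, h⟩ => ⟨R, fun z hz hR => h z hR hz⟩, fun ⟨R, h⟩ => ⟨R, fun z hR hz => h z hz hR⟩⟩

lemma tendsto_norm_FF_atTop : Tendsto (fun z : ℂ => ‖z‖) FF atTop :=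
  tendsto_norm_cobounded_atTop.mono_left inf_le_left

lemma tendsto_inv_FF : Tendsto (fun z : ℂ => z⁻¹) FF (nhds 0) :=
  tendsto_inv₀_cobounded.mono_left inf_le_left

lemma ne_conj_of_mem {q w : ℂ} (hq : q ∈ UHalf) (hw : w ∈ UHalf) :
    w - (starRingEnd ℂ) q ≠ 0 := by
  intro h
  have h1 : (w - (starRingEnd ℂ) q).im = 0 := by rw [h]; rfl
  rw [Complex.sub_im, Complex.conj_im] at h1
  have : (0:ℝ) < w.im := hw
  have : (0:ℝ) < q.im := hq
  linarith

/-- The Cayley-type transform `w ↦ (w-q)/(w-q̄)` maps `ℍ` into the unit disc. -/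
lemma cayley_mem_ball {q w : ℂ} (hq : q ∈ UHalf) (hw : w ∈ UHalf) :
    (w - q) / (w - (starRingEnd ℂ) q) ∈ Metric.ball (0:ℂ) 1 := by
  have hden := ne_conj_of_mem hq hw
  have hq' : (0:ℝ) < q.im := hq
  have hw' : (0:ℝ) < w.im := hw
  have hpos : (0:ℝ) < ‖w - (starRingEnd ℂ) q‖ := by rw [norm_pos_iff]; exact hden
  rw [Metric.mem_ball, dist_zero_right, norm_div, div_lt_one hpos]
  have h1 : Complex.normSq (w - q) < Complex.normSq (w - (starRingEnd ℂ) q) := by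
    simp only [Complex.normSq_apply, Complex.sub_re, Complex.sub_im, Complex.conj_re,
      Complex.conj_im]
    nlinarith [mul_pos hq' hw']
  have h2 := Real.sqrt_lt_sqrt (Complex.normSq_nonneg _) h1
  rwa [← Complex.norm_def, ← Complex.norm_def] at h2

set_option maxHeartbeats 1000000 in
/-- Schwarz–Pick type monotonicity along the imaginary axis for holomorphic
self-maps of the half-plane. -/
lemma schwarzPick {h : ℂ → ℂ} (hdiff : DifferentiableOn ℂ h UHalf)
    (hmaps : MapsTo h UHalf UHalf) {y R : ℝ} (hy : 0 < y) (hyR : y ≤ R) :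
    y * (h ((R:ℂ) * Complex.I)).im ≤ R * (h ((y:ℂ) * Complex.I)).im := by
  have hR : (0:ℝ) < R := lt_of_lt_of_le hy hyR
  set p : ℂ := (y:ℂ) * Complex.I with hpdef
  set z : ℂ := (R:ℂ) * Complex.I with hzdef
  have hp : p ∈ UHalf := by show (0:ℝ) < p.im; simp [hpdef, Complex.mul_im]; exact hy
  have hz : z ∈ UHalf := by show (0:ℝ) < z.im; simp [hzdef, Complex.mul_im]; exact hR
  set a : ℂ := h p with hadef
  have ha : a ∈ UHalf := hmaps hp
  have ha' : (0:ℝ) < a.im := ha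
  -- the inverse Cayley transform at p
  set φ : ℂ → ℂ := fun ω => (p - (starRingEnd ℂ) p * ω) / (1 - ω) with hφdef
  have hφdiff : DifferentiableOn ℂ φ (Metric.ball (0:ℂ) 1) := by
    apply DifferentiableOn.div
    · exact (differentiableOn_const _).sub ((differentiableOn_const _).mul differentiableOn_id)
    · exact (differentiableOn_const _).sub differentiableOn_id
    · intro ω hω
      rw [Metric.mem_ball, dist_zero_right] at hω
      intro hc
      rw [sub_eq_zero] at hc
      rw [← hc] at hω; simp at hω
  have hφmaps : MapsTo φ (Metric.ball (0:ℂ) 1) UHalf := by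
    intro ω hω
    rw [Metric.mem_ball, dist_zero_right] at hω
    have hω1 : Complex.normSq ω < 1 := by
      have : ‖ω‖ ^ 2 < 1 := by nlinarith [norm_nonneg ω]
      rwa [← Complex.sq_norm]
    have hden : (1:ℂ) - ω ≠ 0 := by
      intro hc
      rw [sub_eq_zero] at hc
      rw [← hc] at hω; simp at hω
    show (0:ℝ) < (φ ω).im
    rw [hφdef]
    simp only []
    rw [Complex.div_im]
    have hns : (0:ℝ) < Complex.normSq (1 - ω) := by
      rwa [Complex.normSq_pos]
    rw [div_sub_div_same]
    apply div_pos ?_ hns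
    have hpim : (0:ℝ) < p.im := hp
    rw [Complex.normSq_apply] at hω1
    simp only [Complex.sub_re, Complex.sub_im, Complex.mul_re, Complex.mul_im,
      Complex.conj_re, Complex.conj_im, Complex.one_re, Complex.one_im]
    nlinarith [hpim, hω1]
  have hφ0 : φ 0 = p := by simp [hφdef]
  -- Cayley transform at a
  set T : ℂ → ℂ := fun w => (w - a) / (w - (starRingEnd ℂ) a) with hTdef
  have hTdiff : DifferentiableOn ℂ T UHalf := by
    apply DifferentiableOn.div
    · exact differentiableOn_id.sub (differentiableOn_const _)
    · exact differentiableOn_id.sub (differentiableOn_const _)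
    · exact fun w hw => ne_conj_of_mem ha hw
  set S : ℂ → ℂ := fun ω => T (h (φ ω)) with hSdef
  have hSdiff : DifferentiableOn ℂ S (Metric.ball (0:ℂ) 1) :=
    (hTdiff.comp (hdiff.comp hφdiff hφmaps) (hmaps.comp hφmaps))
  have hSmaps : MapsTo S (Metric.ball (0:ℂ) 1) (Metric.ball (0:ℂ) 1) := by
    intro ω hω
    exact cayley_mem_ball ha (hmaps (hφmaps hω))
  have hS0 : S 0 = 0 := by
    rw [hSdef]
    simp only []
    rw [hφ0, ← hadef, hTdef]
    simp
  -- the point ω₀ = cayley p z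
  set ω₀ : ℂ := (z - p) / (z - (starRingEnd ℂ) p) with hω₀def
  have hω₀ : ω₀ ∈ Metric.ball (0:ℂ) 1 := cayley_mem_ball hp hz
  have hω₀abs : ‖ω₀‖ < 1 := by
    have := hω₀; rwa [Metric.mem_ball, dist_zero_right] at this
  have hSch := Complex.norm_le_norm_of_mapsTo_ball hSdiff (hSmaps.mono_right Metric.ball_subset_closedBall) hS0 hω₀abs
  have hφω₀ : φ ω₀ = z := by
    have hden := ne_conj_of_mem hp hz
    have hpp : p - (starRingEnd ℂ) p ≠ 0 := by
      intro hc
      have h1 : (p - (starRingEnd ℂ) p).im = 0 := by rw [hc]; rfl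
      rw [Complex.sub_im, Complex.conj_im] at h1
      have : (0:ℝ) < p.im := hp
      linarith
    rw [hφdef, hω₀def]
    simp only []
    rw [div_eq_iff]
    · field_simp
      ring
    · intro hc
      rw [sub_eq_zero] at hc
      have h2 : (z - (starRingEnd ℂ) p) * 1 = (z - (starRingEnd ℂ) p) * ((z - p) / (z - (starRingEnd ℂ) p)) := by
        rw [← hc]
      rw [mul_one, mul_div_cancel₀ _ hden] at h2
      have h3 : p - (starRingEnd ℂ) p = 0 := by
        have := congrArg (fun w => w - z + p) h2
        simp at this
        rw [sub_eq_zero]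
        linear_combination h2
      exact hpp h3
  rw [hSdef] at hSch
  simp only [] at hSch
  rw [hφω₀] at hSch
  -- now hSch : abs (T (h z)) ≤ abs ω₀
  set W : ℂ := h z with hWdef
  have hW : W ∈ UHalf := hmaps hz
  have hWim : (0:ℝ) < W.im := hW
  have hdenW := ne_conj_of_mem ha hW
  have hdenz := ne_conj_of_mem hp hz
  rw [hTdef] at hSch
  simp only [] at hSch
  rw [hω₀def] at hSch
  rw [norm_div, norm_div] at hSch
  -- compute abs (z - p) and abs (z - conj p)
  have hzp : ‖z - p‖ = R - y := by
    have h9 : z - p = ((R - y : ℝ):ℂ) * Complex.I := by rw [hzdef, hpdef]; push_cast; ring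
    rw [h9, norm_mul, Complex.norm_real, Real.norm_eq_abs, Complex.norm_I, mul_one]
    exact abs_of_nonneg (by linarith)
  have hzpc : ‖z - (starRingEnd ℂ) p‖ = R + y := by
    have h9 : z - (starRingEnd ℂ) p = ((R + y : ℝ):ℂ) * Complex.I := by
      rw [hzdef, hpdef, map_mul, Complex.conj_ofReal, Complex.conj_I]
      push_cast; ring
    rw [h9, norm_mul, Complex.norm_real, Real.norm_eq_abs, Complex.norm_I, mul_one]
    exact abs_of_nonneg (by linarith)
  rw [hzp, hzpc] at hSch
  have hWa : (0:ℝ) < ‖W - (starRingEnd ℂ) a‖ := by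
    rw [Complex.norm_def, Real.sqrt_pos, Complex.normSq_pos]; exact hdenW
  have hcross : (R + y) * ‖W - a‖ ≤ (R - y) * ‖W - (starRingEnd ℂ) a‖ := by
    rw [div_le_div_iff₀ hWa (by linarith)] at hSch
    linarith
  have hsq : (R + y)^2 * Complex.normSq (W - a) ≤ (R - y)^2 * Complex.normSq (W - (starRingEnd ℂ) a) := by
    have h1 : ((R + y) * ‖W - a‖)^2 ≤ ((R - y) * ‖W - (starRingEnd ℂ) a‖)^2 := by
      apply sq_le_sq'
      · have : (0:ℝ) ≤ (R + y) * ‖W - a‖ := by positivity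
        have h2 : (0:ℝ) ≤ (R - y) * ‖W - (starRingEnd ℂ) a‖ := by
          apply le_trans this hcross
        linarith
      · exact hcross
    rw [mul_pow, mul_pow, Complex.sq_norm, Complex.sq_norm] at h1
    exact h1
  set x : ℝ := W.re - a.re with hxdef
  set A : ℝ := W.im with hAdef
  set B : ℝ := a.im with hBdef
  have hexp1 : Complex.normSq (W - a) = x^2 + (A - B)^2 := by
    simp only [Complex.normSq_apply, Complex.sub_re, Complex.sub_im, hxdef, hAdef, hBdef]
    ring
  have hexp2 : Complex.normSq (W - (starRingEnd ℂ) a) = x^2 + (A + B)^2 := by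
    simp only [Complex.normSq_apply, Complex.sub_re, Complex.sub_im, Complex.conj_re,
      Complex.conj_im, hxdef, hAdef, hBdef]
    ring
  rw [hexp1, hexp2] at hsq
  show y * A ≤ R * B
  by_contra hc
  push_neg at hc
  have hB' : (0:ℝ) < B := ha'
  have hA' : (0:ℝ) < A := hWim
  have h6 : (0:ℝ) < R * A - y * B := by nlinarith
  have h7 : (0:ℝ) < y * A - R * B := by nlinarith
  have h8 : (y*A - R*B) * (R*A - y*B) ≤ -(R*y*x^2) := by nlinarith [hsq]
  linarith [mul_pos h7 h6, h8, mul_nonneg (mul_pos hR hy).le (sq_nonneg x)]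


lemma tendsto_axis_FF : Tendsto (fun t : ℝ => (t:ℂ) * Complex.I) atTop FF := by
  rw [Filter.tendsto_inf]
  constructor
  · rw [← comap_norm_atTop, tendsto_comap_iff]
    apply Tendsto.congr' ?_ tendsto_id
    filter_upwards [eventually_ge_atTop (0:ℝ)] with t ht
    show t = ‖(t:ℂ) * Complex.I‖
    rw [norm_mul, Complex.norm_I, mul_one, Complex.norm_real, Real.norm_eq_abs,
      _root_.abs_of_nonneg ht]
  · rw [tendsto_principal]
    filter_upwards [eventually_gt_atTop (0:ℝ)] with t ht
    show (0:ℝ) < ((t:ℂ) * Complex.I).im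
    simp [Complex.mul_im]
    exact ht

set_option maxHeartbeats 1000000 in
/-- If a holomorphic self-map of `ℍ` satisfies `z(h z - z) → d` at `∞`, then `d ≤ 0`. -/
lemma core {h : ℂ → ℂ} {d : ℝ} (hdiff : DifferentiableOn ℂ h UHalf)
    (hmaps : MapsTo h UHalf UHalf)
    (hnorm : Tendsto (fun z => z * (h z - z)) FF (nhds (d : ℂ))) : d ≤ 0 := by
  set E : ℝ → ℝ := fun t => t * (t - (h ((t:ℂ) * Complex.I)).im) with hEdef
  have hEt : Tendsto E atTop (nhds d) := by
    have h1 := hnorm.comp tendsto_axis_FF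
    have h2 := (Complex.continuous_re.tendsto _).comp h1
    have h3 : ((d:ℂ)).re = d := by simp
    rw [h3] at h2
    apply h2.congr
    intro t
    show ((fun z => z * (h z - z)) ((t:ℂ) * Complex.I)).re = E t
    simp only [hEdef, Complex.mul_re, Complex.sub_re, Complex.sub_im, Complex.mul_im,
      Complex.I_re, Complex.I_im, Complex.ofReal_re, Complex.ofReal_im]
    ring
  have hneg : ∀ᶠ y : ℝ in atTop, E y ≤ 0 := by
    filter_upwards [eventually_gt_atTop (0:ℝ)] with y hy
    have hev : ∀ᶠ R : ℝ in atTop, E y ≤ y^2/R^2 * E R := by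
      filter_upwards [eventually_ge_atTop y] with R hR
      have hR0 : (0:ℝ) < R := lt_of_lt_of_le hy hR
      have hsp := schwarzPick hdiff hmaps hy hR
      have hmul : (y/R) * (y * (h ((R:ℂ) * Complex.I)).im) ≤ (y/R) * (R * (h ((y:ℂ) * Complex.I)).im) :=
        mul_le_mul_of_nonneg_left hsp (by positivity)
      have heq : y^2/R^2 * E R = y^2 - (y/R) * (y * (h ((R:ℂ) * Complex.I)).im) := by
        rw [hEdef]
        field_simp
      have heq2 : (y/R) * (R * (h ((y:ℂ) * Complex.I)).im) = y * (h ((y:ℂ) * Complex.I)).im := by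
        field_simp
      rw [heq]
      rw [heq2] at hmul
      rw [hEdef]
      simp only []
      nlinarith [hmul]
    have hlim : Tendsto (fun R : ℝ => y^2/R^2 * E R) atTop (nhds 0) := by
      have hp : Tendsto (fun R : ℝ => y^2/R^2) atTop (nhds 0) := by
        have h4 : Tendsto (fun R : ℝ => R^2) atTop atTop :=
          tendsto_pow_atTop (two_ne_zero)
        have h5 := h4.inv_tendsto_atTop
        have h6 := h5.const_mul (y^2)
        rw [mul_zero] at h6
        apply h6.congr
        intro R
        simp [div_eq_mul_inv]
      have := hp.mul hEt
      rw [zero_mul] at this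
      exact this
    exact ge_of_tendsto hlim hev
  exact le_of_tendsto hEt hneg


/-- A conformal bijection from an open `U ⊆ ℍ` containing a neighborhood of `∞` in `ℍ`
onto `ℍ`, with hydrodynamic normalization of capacity `c`. -/
structure Nice (U : Set ℂ) (g : ℂ → ℂ) (c : ℝ) : Prop where
  open_ : IsOpen U
  sub : U ⊆ UHalf
  far : ∀ᶠ z in FF, z ∈ U
  diff : DifferentiableOn ℂ g U
  inj : InjOn g U
  image : g '' U = UHalf
  norm : Tendsto (fun z => z * (g z - z)) FF (nhds (c : ℂ))

namespace Nice

variable {U : Set ℂ} {g : ℂ → ℂ} {c : ℝ}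

lemma mapsTo (n : Nice U g c) : MapsTo g U UHalf := n.image ▸ mapsTo_image g U

/-- Images of neighborhoods are neighborhoods (openness of injective holomorphic maps). -/
lemma image_mem_nhds (n : Nice U g c) {z₀ : ℂ} (hz₀ : z₀ ∈ U) {V : Set ℂ}
    (hV : V ∈ nhds z₀) : g '' V ∈ nhds (g z₀) := by
  have han : AnalyticAt ℂ g z₀ := (n.diff.analyticOnNhd n.open_) z₀ hz₀
  rcases han.eventually_constant_or_nhds_le_map_nhds with h | h
  · exfalso
    rcases Metric.mem_nhds_iff.1 (Filter.inter_mem h (n.open_.mem_nhds hz₀)) with ⟨r, hr, hball⟩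
    have h1 : z₀ + r / 2 ∈ Metric.ball z₀ r := by
      simp only [Metric.mem_ball, dist_self_add_left]
      have : ‖(r:ℂ)/2‖ = r/2 := by
        rw [norm_div]
        simp [Complex.norm_real, abs_of_pos hr]
      rw [this]; linarith
    have h2 := hball h1
    have h3 : z₀ + r / 2 = z₀ := n.inj h2.2 hz₀ h2.1
    have : (r : ℂ) / 2 ≠ 0 := by
      simp only [ne_eq, div_eq_zero_iff, Complex.ofReal_eq_zero, OfNat.ofNat_ne_zero, or_false]
      exact ne_of_gt hr
    apply this
    have := congrArg (fun w => w - z₀) h3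
    simpa using this
  · exact h (Filter.image_mem_map hV)

lemma isOpen_image (n : Nice U g c) {B : Set ℂ} (hB : IsOpen B) (hBU : B ⊆ U) :
    IsOpen (g '' B) := by
  rw [isOpen_iff_mem_nhds]
  rintro w ⟨z, hz, rfl⟩
  exact n.image_mem_nhds (hBU hz) (hB.mem_nhds hz)

open scoped Classical in
/-- A choice of inverse for `g`. -/
noncomputable def inv (n : Nice U g c) : ℂ → ℂ := fun w =>
  if h : ∃ z ∈ U, g z = w then h.choose else 0

lemma inv_spec (n : Nice U g c) {w : ℂ} (hw : w ∈ UHalf) :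
    n.inv w ∈ U ∧ g (n.inv w) = w := by
  have h : ∃ z ∈ U, g z = w := by
    rw [← n.image] at hw; rcases hw with ⟨z, hz, rfl⟩; exact ⟨z, hz, rfl⟩
  classical
  rw [Nice.inv, dif_pos h]
  exact ⟨h.choose_spec.1, h.choose_spec.2⟩

lemma inv_mem (n : Nice U g c) {w : ℂ} (hw : w ∈ UHalf) : n.inv w ∈ U := (n.inv_spec hw).1

lemma g_inv (n : Nice U g c) {w : ℂ} (hw : w ∈ UHalf) : g (n.inv w) = w := (n.inv_spec hw).2

lemma inv_g (n : Nice U g c) {z : ℂ} (hz : z ∈ U) : n.inv (g z) = z := by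
  have hgz : g z ∈ UHalf := n.mapsTo hz
  exact n.inj (n.inv_mem hgz) hz (n.g_inv hgz)

lemma continuousAt_inv (n : Nice U g c) {w₀ : ℂ} (hw₀ : w₀ ∈ UHalf) :
    ContinuousAt n.inv w₀ := by
  rw [Metric.continuousAt_iff]
  intro ε hε
  set z₀ := n.inv w₀ with hz₀def
  have hz₀ : z₀ ∈ U := n.inv_mem hw₀
  have himg : g '' (U ∩ Metric.ball z₀ ε) ∈ nhds (g z₀) :=
    n.image_mem_nhds hz₀ (Filter.inter_mem (n.open_.mem_nhds hz₀)
      (Metric.ball_mem_nhds _ hε))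
  rw [n.g_inv hw₀] at himg
  rcases Metric.mem_nhds_iff.1 (Filter.inter_mem himg (isOpen_uHalf.mem_nhds hw₀)) with
    ⟨δ, hδ, hsub⟩
  refine ⟨δ, hδ, fun {w} hwd => ?_⟩
  have hw : w ∈ g '' (U ∩ Metric.ball z₀ ε) ∧ w ∈ UHalf := by
    have := hsub (Metric.mem_ball.2 hwd); exact ⟨this.1, this.2⟩
  rcases hw.1 with ⟨v, ⟨hvU, hvball⟩, hgv⟩
  have : n.inv w = v := by rw [← hgv, n.inv_g hvU]
  rw [this]
  exact hvball

/-- Far-field estimate: far out in `ℍ`, `z ∈ U` and `‖g z - z‖ ≤ 1`. -/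
lemma farField (n : Nice U g c) :
    ∃ R : ℝ, 1 ≤ R ∧ ∀ z ∈ UHalf, R ≤ ‖z‖ → z ∈ U ∧ ‖g z - z‖ ≤ 1 := by
  have h1 : ∀ᶠ z in FF, ‖z * (g z - z)‖ ≤ |c| + 1 := by
    have : Tendsto (fun z => ‖z * (g z - z)‖) FF (nhds ‖(c : ℂ)‖) := n.norm.norm
    apply this.eventually_le_const
    rw [Complex.norm_real, Real.norm_eq_abs]; linarith
  have h2 : ∀ᶠ z in FF, |c| + 1 ≤ ‖z‖ :=
    tendsto_norm_FF_atTop.eventually_ge_atTop _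
  have h3 : ∀ᶠ z in FF, z ∈ U ∧ ‖g z - z‖ ≤ 1 := by
    filter_upwards [n.far, h1, h2] with z hU hn hz
    refine ⟨hU, ?_⟩
    have hz0 : (0:ℝ) < ‖z‖ := lt_of_lt_of_le (by positivity) hz
    rw [norm_mul, mul_comm] at hn
    calc ‖g z - z‖ ≤ (|c| + 1) / ‖z‖ := (le_div_iff₀ hz0).2 hn
    _ ≤ 1 := by rw [div_le_one hz0]; exact hz
  rcases eventually_FF_iff.1 h3 with ⟨R, hR⟩
  exact ⟨max R 1, le_max_right _ _, fun z hz hRz =>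
    hR z hz (le_trans (le_max_left _ _) hRz)⟩

end Nice

/-- The far region in the upper half-plane is preconnected. -/
lemma isPreconnected_far {r : ℝ} (hr : 0 ≤ r) :
    IsPreconnected {w : ℂ | w ∈ UHalf ∧ r < ‖w‖} := by
  have h0 : IsPreconnected ((Ioi r) ×ˢ (Ioo (0:ℝ) Real.pi)) :=
    ((convex_Ioi r).prod (convex_Ioo 0 Real.pi)).isPreconnected
  have hcont : Continuous (fun p : ℝ × ℝ => (p.1 : ℂ) * Complex.exp (p.2 * Complex.I)) := by
    fun_prop
  have himg := h0.image _ hcont.continuousOn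
  have heq : (fun p : ℝ × ℝ => (p.1 : ℂ) * Complex.exp (p.2 * Complex.I)) ''
      ((Ioi r) ×ˢ (Ioo (0:ℝ) Real.pi)) = {w : ℂ | w ∈ UHalf ∧ r < ‖w‖} := by
    ext w
    constructor
    · rintro ⟨⟨t, θ⟩, ⟨ht, hθ⟩, rfl⟩
      simp only [mem_Ioi] at ht
      simp only [mem_Ioo] at hθ
      have ht0 : 0 < t := lt_of_le_of_lt hr ht
      have him : ((t:ℂ) * Complex.exp ((θ:ℂ) * Complex.I)).im = t * Real.sin θ := by
        rw [Complex.exp_mul_I]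
        simp [Complex.mul_im, Complex.mul_re, Complex.sin_ofReal_re]
      constructor
      · show 0 < ((t:ℂ) * Complex.exp ((θ:ℂ) * Complex.I)).im
        rw [him]
        exact mul_pos ht0 (Real.sin_pos_of_pos_of_lt_pi hθ.1 hθ.2)
      · rw [norm_mul]
        have h1 : ‖Complex.exp ((θ:ℂ) * Complex.I)‖ = 1 := by
          rw [Complex.norm_exp_ofReal_mul_I]
        rw [h1, mul_one, Complex.norm_real, Real.norm_eq_abs, abs_of_pos ht0]
        exact ht
    · rintro ⟨hw, hr'⟩
      have hwne : w ≠ 0 := by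
        intro h; rw [h] at hr'; simp at hr'; linarith
      refine ⟨(‖w‖, Complex.arg w), ⟨?_, ?_, ?_⟩, ?_⟩
      · exact hr'
      · rcases lt_or_eq_of_le ((Complex.arg_nonneg_iff).2 (le_of_lt hw)) with h | h
        · exact h
        · exfalso
          have := (Complex.arg_eq_zero_iff).1 h.symm
          have : w.im = 0 := this.2
          exact absurd this (ne_of_gt hw)
      · exact (Complex.arg_lt_pi_iff).2 (Or.inr (ne_of_gt hw))
      · exact Complex.norm_mul_exp_arg_mul_I w
  rw [heq] at himg
  exact himg

namespace Nice

variable {U : Set ℂ} {g : ℂ → ℂ} {c : ℝ}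

lemma eventually_mem_uHalf : ∀ᶠ w in FF, w ∈ UHalf := by
  rw [eventually_inf_principal]
  exact Eventually.of_forall (fun z h => h)

/-- Properness: the inverse of a Loewner-type map tends to `∞` within `ℍ`. -/
lemma tendsto_inv_FF_FF (n : Nice U g c) : Tendsto n.inv FF FF := by
  rw [Filter.tendsto_inf]
  constructor
  · rw [← comap_norm_atTop, tendsto_comap_iff]
    rw [Filter.tendsto_atTop]
    intro M
    obtain ⟨R, hR1, hfar⟩ := n.farField
    set M' := max M R with hM'
    have hRM : R ≤ M' := le_max_right _ _
    have hMM : M ≤ M' := le_max_left _ _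
    have hM0 : (0:ℝ) < M' := lt_of_lt_of_le (by linarith) hRM
    set B := U ∩ Metric.ball (0:ℂ) (M' + 1) with hB
    have hBopen : IsOpen B := n.open_.inter Metric.isOpen_ball
    have hWopen : IsOpen (g '' B) := n.isOpen_image hBopen inter_subset_left
    set W := g '' B with hW
    set Y := {w : ℂ | w ∈ UHalf ∧ M' + 3 < ‖w‖} with hY
    -- closure W ∩ Y ⊆ W
    have hYW : ∀ w ∈ Y, w ∈ closure W → w ∈ W := by
      rintro w ⟨hwH, hwn⟩ hwc
      have : w ∈ g '' U := n.image.symm ▸ hwH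
      rcases this with ⟨z, hzU, rfl⟩
      rcases lt_or_ge ‖z‖ (M' + 1) with hz | hz
      · exact ⟨z, ⟨hzU, Metric.mem_ball.2 (by simpa using hz)⟩, rfl⟩
      rcases le_or_gt ‖z‖ (M' + 2) with hz2 | hz2
      · exfalso
        have hzH : z ∈ UHalf := n.sub hzU
        have := (hfar z hzH (le_trans (by linarith) hz)).2
        have h6 : ‖g z‖ ≤ ‖z‖ + 1 := by
          have h7 : g z = z + (g z - z) := by ring
          rw [h7]
          have := norm_add_le z (g z - z)
          linarith
        linarith
      · exfalso
        have hV : g '' (U ∩ Metric.ball z 1) ∈ nhds (g z) :=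
          n.image_mem_nhds hzU (Filter.inter_mem (n.open_.mem_nhds hzU)
            (Metric.ball_mem_nhds _ one_pos))
        rcases (mem_closure_iff_nhds.1 hwc) _ hV with ⟨q, hq1, hq2⟩
        rcases hq1 with ⟨v, ⟨hvU, hvb⟩, hgv⟩
        rcases hq2 with ⟨b, ⟨hbU, hbb⟩, hgb⟩
        have hvb' : v = b := n.inj hvU hbU (by rw [hgv, hgb])
        have h2 : ‖v - z‖ < 1 := by
          have := Metric.mem_ball.1 hvb; rwa [dist_eq_norm] at this
        have h3 : ‖z‖ - ‖v‖ ≤ ‖v - z‖ := by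
          have := norm_sub_norm_le z v
          rw [norm_sub_rev] at this
          linarith
        have h1 : M' + 1 < ‖v‖ := by linarith
        rw [hvb'] at h1
        have := Metric.mem_ball.1 hbb
        rw [dist_zero_right] at this
        linarith
    -- Y ∩ W = ∅
    have hdisj : ∀ w ∈ Y, w ∉ W := by
      intro w₀ hw₀Y hw₀W
      -- a far point not in W
      set t : ℝ := max (M' + 5) R with ht
      have ht5 : M' + 5 ≤ t := le_max_left _ _
      have htR : R ≤ t := le_max_right _ _
      have ht0 : (0:ℝ) < t := by linarith
      set z₁ : ℂ := (t : ℂ) * Complex.I with hz₁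
      have hz₁H : z₁ ∈ UHalf := by
        show 0 < z₁.im
        simp [hz₁, Complex.mul_im]
        exact ht0
      have hz₁n : ‖z₁‖ = t := by
        rw [hz₁, norm_mul, Complex.norm_real, Complex.norm_I, mul_one,
          Real.norm_eq_abs, abs_of_pos ht0]
      have hz₁U : z₁ ∈ U := (hfar z₁ hz₁H (by rw [hz₁n]; exact htR)).1
      have hz₁f : ‖g z₁ - z₁‖ ≤ 1 := (hfar z₁ hz₁H (by rw [hz₁n]; exact htR)).2
      set w₁ := g z₁ with hw₁
      have hw₁H : w₁ ∈ UHalf := n.mapsTo hz₁U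
      have hw₁n : M' + 3 < ‖w₁‖ := by
        have h3 : ‖z₁‖ - ‖w₁‖ ≤ ‖w₁ - z₁‖ := by
          have := norm_sub_norm_le z₁ w₁
          rw [norm_sub_rev] at this
          linarith
        rw [hz₁n] at h3
        linarith
      have hw₁Y : w₁ ∈ Y := ⟨hw₁H, hw₁n⟩
      have hw₁W : w₁ ∉ closure W := by
        intro hcl
        have : w₁ ∈ W := hYW w₁ hw₁Y hcl
        rcases this with ⟨b, ⟨hbU, hbb⟩, hgb⟩
        have : b = z₁ := n.inj hbU hz₁U hgb
        rw [this] at hbb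
        have := Metric.mem_ball.1 hbb
        rw [dist_zero_right, hz₁n] at this
        linarith
      -- preconnectedness contradiction
      have hYpre : IsPreconnected Y := isPreconnected_far (by linarith)
      have hcover : Y ⊆ W ∪ (closure W)ᶜ := by
        intro w hw
        by_cases h : w ∈ closure W
        · exact Or.inl (hYW w hw h)
        · exact Or.inr h
      rcases hYpre W (closure W)ᶜ hWopen (isClosed_closure.isOpen_compl) hcover
        ⟨w₀, hw₀Y, hw₀W⟩ ⟨w₁, hw₁Y, hw₁W⟩ with ⟨q, _, hqW, hqc⟩
      exact hqc (subset_closure hqW)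
    -- conclude
    filter_upwards [tendsto_norm_FF_atTop.eventually_gt_atTop (M' + 3),
      eventually_mem_uHalf] with w hwn hwH
    show M ≤ ‖n.inv w‖
    have hwY : w ∈ Y := ⟨hwH, hwn⟩
    by_contra hlt
    push_neg at hlt
    have hinvB : n.inv w ∈ B := ⟨n.inv_mem hwH, Metric.mem_ball.2 (by
      rw [dist_zero_right]; linarith)⟩
    exact hdisj w hwY ⟨n.inv w, hinvB, n.g_inv hwH⟩
  · rw [tendsto_principal]
    filter_upwards [eventually_mem_uHalf] with w hw
    exact n.sub (n.inv_mem hw)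

set_option maxHeartbeats 1000000 in
/-- Two Loewner-type normalized maps of the same domain have comparable capacities. -/
lemma key {U : Set ℂ} {g g' : ℂ → ℂ} {c c' : ℝ}
    (n : Nice U g c) (n' : Nice U g' c') : c ≤ c' := by
  set f' := n'.inv with hf'
  set h : ℂ → ℂ := fun w => g (f' w) with hh
  have hcont : ∀ w ∈ UHalf, ContinuousAt h w := by
    intro w hw
    have h1 : ContinuousAt f' w := n'.continuousAt_inv hw
    have h2 : ContinuousAt g (f' w) :=
      (n.diff.differentiableAt (n.open_.mem_nhds (n'.inv_mem hw))).continuousAt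
    exact h2.comp h1
  have hdiffAt : ∀ w ∈ UHalf, deriv g' (f' w) ≠ 0 → DifferentiableAt ℂ h w := by
    intro w hw hd
    have hz : f' w ∈ U := n'.inv_mem hw
    have hg'd : HasDerivAt g' (deriv g' (f' w)) (f' w) :=
      (n'.diff.differentiableAt (n'.open_.mem_nhds hz)).hasDerivAt
    have hinv : HasDerivAt f' (deriv g' (f' w))⁻¹ w := by
      apply HasDerivAt.of_local_left_inverse (n'.continuousAt_inv hw) hg'd hd
      filter_upwards [isOpen_uHalf.mem_nhds hw] with v hv
      exact n'.g_inv hv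
    have hgd : DifferentiableAt ℂ g (f' w) := n.diff.differentiableAt (n.open_.mem_nhds hz)
    exact hgd.comp w hinv.differentiableAt
  have hdiff : DifferentiableOn ℂ h UHalf := by
    intro w hw
    apply DifferentiableAt.differentiableWithinAt
    by_cases hd : deriv g' (f' w) ≠ 0
    · exact hdiffAt w hw hd
    push_neg at hd
    set z₀ := f' w with hz₀
    have hz₀U : z₀ ∈ U := n'.inv_mem hw
    have han : AnalyticOnNhd ℂ (deriv g') U := (n'.diff.analyticOnNhd n'.open_).deriv
    rcases (han z₀ hz₀U).eventually_eq_zero_or_eventually_ne_zero with hcase | hcase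
    · exfalso
      rcases Metric.mem_nhds_iff.1 (Filter.inter_mem hcase (n'.open_.mem_nhds hz₀U)) with
        ⟨r, hr, hball⟩
      have hhalf : z₀ + (r:ℂ)/2 ∈ Metric.ball z₀ r := by
        simp only [Metric.mem_ball, dist_self_add_left]
        have : ‖(r:ℂ)/2‖ = r/2 := by
          rw [norm_div]
          simp [Complex.norm_real, abs_of_pos hr]
        rw [this]; linarith
      have hconst : g' (z₀ + (r:ℂ)/2) = g' z₀ := by
        have hcv : Convex ℝ (Metric.ball z₀ r) := convex_ball _ _
        have hdball : DifferentiableOn ℂ g' (Metric.ball z₀ r) :=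
          n'.diff.mono (fun x hx => (hball hx).2)
        apply hcv.is_const_of_fderivWithin_eq_zero hdball ?_ hhalf (Metric.mem_ball_self hr)
        intro x hx
        have hx0 : deriv g' x = (0:ℂ) := (hball hx).1
        have hdx : DifferentiableAt ℂ g' x :=
          n'.diff.differentiableAt (n'.open_.mem_nhds (hball hx).2)
        have h0 : HasDerivAt g' 0 x := hx0 ▸ hdx.hasDerivAt
        have h1 : HasFDerivAt g' (0 : ℂ →L[ℂ] ℂ) x := by
          have h2 := h0.hasFDerivAt
          have h3 : ContinuousLinearMap.toSpanSingleton ℂ (0:ℂ) = (0 : ℂ →L[ℂ] ℂ) := by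
            ext v; simp
          rwa [h3] at h2
        rw [fderivWithin_of_isOpen Metric.isOpen_ball hx, h1.fderiv]
      have : z₀ + (r:ℂ)/2 = z₀ := n'.inj (hball hhalf).2 hz₀U hconst
      have h4 : (r:ℂ)/2 ≠ 0 := by
        simp only [ne_eq, div_eq_zero_iff, Complex.ofReal_eq_zero, OfNat.ofNat_ne_zero, or_false]
        exact ne_of_gt hr
      apply h4
      have h5 := congrArg (fun v => v - z₀) this
      simpa using h5
    · -- isolated zero of deriv g'
      apply AnalyticAt.differentiableAt
      apply Complex.analyticAt_of_differentiable_on_punctured_nhds_of_continuousAt ?_ (hcont w hw)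
      rw [eventually_nhdsWithin_iff] at hcase ⊢
      have hf'cont : ContinuousAt f' w := n'.continuousAt_inv hw
      have hpre : ∀ᶠ v in nhds w, (f' v) ∈ ({z₀}ᶜ : Set ℂ) → deriv g' (f' v) ≠ 0 := by
        have hc2 : ∀ᶠ x in nhds (f' w), x ∈ ({z₀}ᶜ : Set ℂ) → deriv g' x ≠ 0 := by
          rw [← hz₀]; exact hcase
        exact Filter.Tendsto.eventually hf'cont hc2
      have hH : ∀ᶠ v in nhds w, v ∈ UHalf := isOpen_uHalf.mem_nhds hw
      filter_upwards [hpre, hH] with v hv1 hv2 hvne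
      have hne : f' v ≠ z₀ := by
        intro hEq
        apply hvne
        have h6 : v = g' (f' v) := (n'.g_inv hv2).symm
        have h7 : w = g' z₀ := (n'.g_inv hw).symm
        show v = w
        rw [h6, hEq, ← h7]
      exact hdiffAt v hv2 (hv1 (by simpa using hne))
  have hmaps : MapsTo h UHalf UHalf := fun w hw => n.mapsTo (n'.inv_mem hw)
  -- limit computations
  have hne0 : ∀ᶠ z : ℂ in FF, z ≠ 0 := by
    filter_upwards [tendsto_norm_FF_atTop.eventually_ge_atTop 1] with z hz
    intro h0
    rw [h0] at hz; simp at hz; linarith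
  have hg0 : Tendsto (fun z => g z - z) FF (nhds 0) := by
    have h1 := n.norm.mul tendsto_inv_FF
    rw [mul_zero] at h1
    apply h1.congr'
    filter_upwards [hne0] with z hz
    field_simp
  have hg'0 : Tendsto (fun z => g' z - z) FF (nhds 0) := by
    have h1 := n'.norm.mul tendsto_inv_FF
    rw [mul_zero] at h1
    apply h1.congr'
    filter_upwards [hne0] with z hz
    field_simp
  have hψ : Tendsto (fun z => g' z * (g z - g' z)) FF (nhds ((c:ℂ) - (c':ℂ))) := by
    have h1 := (n.norm.sub n'.norm).add ((hg'0).mul (hg0.sub hg'0))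
    rw [zero_mul, add_zero] at h1
    apply h1.congr
    intro z
    ring
  have hfinal : Tendsto (fun w => w * (h w - w)) FF (nhds ((c:ℂ) - (c':ℂ))) := by
    have hT := n'.tendsto_inv_FF_FF
    have hcomp := hψ.comp hT
    apply hcomp.congr'
    filter_upwards [eventually_mem_uHalf] with w hw
    show g' (f' w) * (g (f' w) - g' (f' w)) = w * (h w - w)
    rw [n'.g_inv hw]
  have hcore : c - c' ≤ 0 := by
    apply core hdiff hmaps
    have : ((c - c' : ℝ) : ℂ) = (c:ℂ) - (c':ℂ) := by push_cast; ring
    rw [this]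
    exact hfinal
  linarith

end Nice

lemma uHalf_ne_zero {w : ℂ} (hw : w ∈ UHalf) : w ≠ 0 := by
  intro h
  have : (0:ℝ) < w.im := hw
  rw [h] at this
  simp at this


/-- relative closedness gives openness of the complement. -/
lemma isOpen_compl_hull {K : Set ℂ} (h : IsHHull K) : IsOpen (UHalf \ K) := by
  have heq : UHalf \ K = UHalf ∩ (closure K)ᶜ := by
    ext z
    constructor
    · rintro ⟨hz, hK⟩
      refine ⟨hz, fun hc => hK ?_⟩
      rw [← h.rel_closed]; exact ⟨hc, hz⟩
    · rintro ⟨hz, hc⟩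
      exact ⟨hz, fun hK => hc (subset_closure hK)⟩
  rw [heq]
  exact isOpen_uHalf.inter isClosed_closure.isOpen_compl

/-- eventually (far away in ℍ) we are outside a bounded set. -/
lemma eventually_notMem_of_bounded {K : Set ℂ} (h : Bornology.IsBounded K) :
    ∀ᶠ z in FF, z ∉ K := by
  rcases (isBounded_iff_forall_norm_le).1 h with ⟨C, hC⟩
  filter_upwards [tendsto_norm_FF_atTop.eventually_gt_atTop C] with z hz hK
  exact absurd (hC z hK) (not_le.2 hz)

/-- The `Nice` structure associated with a Loewner map of a hull. -/
lemma nice_of_loewner {K : Set ℂ} {g : ℂ → ℂ} {c : ℝ} (hK : IsHHull K)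
    (hg : IsLoewnerMapOf K g c) : Nice (UHalf \ K) g c := by
  refine ⟨isOpen_compl_hull hK, diff_subset, ?_, hg.diff, hg.inj, hg.image, hg.norm⟩
  filter_upwards [eventually_notMem_of_bounded hK.bounded, Nice.eventually_mem_uHalf] with z h1 h2
  exact ⟨h2, h1⟩

end HullAux

open HullAux in
set_option maxHeartbeats 1000000 in
/-- For `ℍ`-hulls `K₁, K₂` with product `K₁·K₂ = K₁ ∪ f_{K₁}(K₂)`:
(a) `K₁ ⊆ K₁·K₂` and `K₂ = (K₁·K₂)/K₁ = g_{K₁}((K₁·K₂) ∖ K₁)`;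
(b) half-plane capacity is additive: `hcap(K₁·K₂) = hcap K₁ + hcap K₂`. -/
theorem hull_product_quotient_and_hcap_add
    (K1 K2 : Set ℂ) (g1 g2 f1 : ℂ → ℂ) (c1 c2 : ℝ)
    (h1 : IsHHull K1) (h2 : IsHHull K2)
    (hg1 : IsLoewnerMapOf K1 g1 c1) (hg2 : IsLoewnerMapOf K2 g2 c2)
    (hf1 : Set.InvOn f1 g1 (UHalf \ K1) UHalf) :
    K1 ⊆ K1 ∪ f1 '' K2 ∧
    g1 '' ((K1 ∪ f1 '' K2) \ K1) = K2 ∧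
    ∀ (g : ℂ → ℂ) (c : ℝ), IsLoewnerMapOf (K1 ∪ f1 '' K2) g c → c = c1 + c2 := by
  classical
  have n1 : Nice (UHalf \ K1) g1 c1 := nice_of_loewner h1 hg1
  have hm1 : MapsTo g1 (UHalf \ K1) UHalf := n1.mapsTo
  have hgf : ∀ w ∈ UHalf, g1 (f1 w) = w := fun w hw => hf1.2 hw
  have hfg : ∀ z ∈ UHalf \ K1, f1 (g1 z) = z := fun z hz => hf1.1 hz
  have hfm : MapsTo f1 UHalf (UHalf \ K1) := by
    intro w hw
    rw [← hg1.image] at hw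
    rcases hw with ⟨z, hz, rfl⟩
    rw [hfg z hz]; exact hz
  have hsub2 : f1 '' K2 ⊆ UHalf \ K1 := by
    rintro _ ⟨k, hk, rfl⟩; exact hfm (h2.subset hk)
  have hdiffset : (K1 ∪ f1 '' K2) \ K1 = f1 '' K2 := by
    ext z
    constructor
    · rintro ⟨hz1 | hz2, hz3⟩
      · exact absurd hz1 hz3
      · exact hz2
    · intro hz
      exact ⟨Or.inr hz, fun hK1 => (hsub2 hz).2 hK1⟩
  have hquot0 : g1 '' ((K1 ∪ f1 '' K2) \ K1) = K2 := by
    rw [hdiffset]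
    ext w
    constructor
    · rintro ⟨_, ⟨k, hk, rfl⟩, rfl⟩
      rw [hgf k (h2.subset hk)]; exact hk
    · intro hw
      exact ⟨f1 w, mem_image_of_mem f1 hw, hgf w (h2.subset hw)⟩
  refine ⟨subset_union_left, hquot0, ?_⟩
  intro g c hg
  set K := K1 ∪ f1 '' K2 with hKdef
  set U := UHalf \ K with hUdef
  have hU1 : U = (UHalf \ K1) ∩ (g1 ⁻¹' (UHalf \ K2)) := by
    ext z
    constructor
    · rintro ⟨hzH, hzK⟩
      have hz1 : z ∈ UHalf \ K1 := ⟨hzH, fun h => hzK (Or.inl h)⟩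
      refine ⟨hz1, hm1 hz1, fun hK2 => hzK (Or.inr ?_)⟩
      exact ⟨g1 z, hK2, hfg z hz1⟩
    · rintro ⟨hz1, hz2⟩
      refine ⟨hz1.1, fun hzK => ?_⟩
      rcases hzK with h | h
      · exact hz1.2 h
      · rcases h with ⟨k, hk, rfl⟩
        apply hz2.2
        rw [hgf k (h2.subset hk)]
        exact hk
  have hUopen : IsOpen U := by
    rw [hU1]
    exact ContinuousOn.isOpen_inter_preimage hg1.diff.continuousOn
      (isOpen_compl_hull h1) (isOpen_compl_hull h2)
  obtain ⟨R, hR1, hfarf⟩ := n1.farField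
  obtain ⟨C, hC⟩ := (isBounded_iff_forall_norm_le).1 h2.bounded
  have hbdd2 : Bornology.IsBounded (f1 '' K2) := by
    rw [isBounded_iff_forall_norm_le]
    refine ⟨max R (C + 2), ?_⟩
    rintro _ ⟨k, hk, rfl⟩
    by_contra hgt
    push_neg at hgt
    have hz : f1 k ∈ UHalf \ K1 := hfm (h2.subset hk)
    have h5 := (hfarf (f1 k) hz.1 (le_of_lt (lt_of_le_of_lt (le_max_left _ _) hgt))).2
    have h6 : ‖f1 k‖ - ‖g1 (f1 k)‖ ≤ ‖g1 (f1 k) - f1 k‖ := by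
      have h7 := norm_sub_norm_le (f1 k) (g1 (f1 k))
      rw [norm_sub_rev] at h7
      linarith
    rw [hgf k (h2.subset hk)] at h6
    have h8 := hC k hk
    have h9 : C + 2 < ‖f1 k‖ := lt_of_le_of_lt (le_max_right _ _) hgt
    have h10 : ‖g1 (f1 k) - f1 k‖ ≤ 1 := h5
    rw [hgf k (h2.subset hk)] at h10
    linarith
  have hKbdd : Bornology.IsBounded K := h1.bounded.union hbdd2
  have hfar : ∀ᶠ z in FF, z ∈ U := by
    filter_upwards [eventually_notMem_of_bounded hKbdd,
      Nice.eventually_mem_uHalf] with z hz1 hz2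
    exact ⟨hz2, hz1⟩
  have n : Nice U g c := ⟨hUopen, diff_subset, hfar, hg.diff, hg.inj, hg.image, hg.norm⟩
  have himg1 : g1 '' U = UHalf \ K2 := by
    ext w
    constructor
    · rintro ⟨z, hz, rfl⟩
      rw [hU1] at hz
      exact hz.2
    · intro hw
      refine ⟨f1 w, ?_, hgf w hw.1⟩
      rw [hU1]
      refine ⟨hfm hw.1, ?_⟩
      show g1 (f1 w) ∈ UHalf \ K2
      rw [hgf w hw.1]
      exact hw
  have hUsub1 : U ⊆ UHalf \ K1 := by rw [hU1]; exact inter_subset_left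
  have hmapsU : MapsTo g1 U (UHalf \ K2) := by
    intro z hz; rw [hU1] at hz; exact hz.2
  have hgev : ∀ᶠ z in FF, ‖g1 z - z‖ ≤ 1 ∧ z ∈ UHalf \ K1 := by
    filter_upwards [n1.far, Nice.eventually_mem_uHalf,
      tendsto_norm_FF_atTop.eventually_ge_atTop R] with z ha hb hc
    exact ⟨(hfarf z hb hc).2, ha⟩
  have hT1 : Tendsto g1 FF FF := by
    rw [Filter.tendsto_inf]
    constructor
    · rw [← comap_norm_atTop, tendsto_comap_iff]
      rw [Filter.tendsto_atTop]
      intro M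
      filter_upwards [hgev, tendsto_norm_FF_atTop.eventually_ge_atTop (M+1)] with z hz hM
      have h8 : ‖z‖ - ‖g1 z‖ ≤ ‖z - g1 z‖ := norm_sub_norm_le z (g1 z)
      rw [norm_sub_rev] at h8
      show M ≤ ‖g1 z‖
      linarith [hz.1]
    · rw [tendsto_principal]
      filter_upwards [hgev] with z hz
      exact hm1 hz.2
  have hne0 : ∀ᶠ z : ℂ in FF, z ≠ 0 := by
    filter_upwards [tendsto_norm_FF_atTop.eventually_ge_atTop 1] with z hz h0
    rw [h0] at hz; simp at hz; linarith
  have hz2c : Tendsto (fun z : ℂ => (z^2)⁻¹) FF (nhds 0) := by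
    have hsq : Tendsto (fun z : ℂ => z^2) FF (Bornology.cobounded ℂ) := by
      rw [← comap_norm_atTop, tendsto_comap_iff]
      have h11 := (tendsto_pow_atTop (two_ne_zero)).comp tendsto_norm_FF_atTop
      apply h11.congr
      intro z
      show ‖z‖^2 = ‖z^2‖
      rw [norm_pow]
    exact tendsto_inv₀_cobounded.comp hsq
  have hquot1 : Tendsto (fun z => g1 z / z) FF (nhds 1) := by
    have hml := hg1.norm.mul hz2c
    rw [mul_zero] at hml
    have h12 := hml.const_add (1:ℂ)
    rw [add_zero] at h12
    apply h12.congr'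
    filter_upwards [hne0] with z hz
    field_simp
    ring
  have hquot : Tendsto (fun z => z / g1 z) FF (nhds 1) := by
    have h9 := hquot1.inv₀ one_ne_zero
    rw [inv_one] at h9
    apply h9.congr
    intro z
    rw [inv_div]
  have hnormG : Tendsto (fun z => z * (g2 (g1 z) - z)) FF (nhds ((c1:ℂ) + c2)) := by
    have hB := hg2.norm.comp hT1
    have hsum := hg1.norm.add (hquot.mul hB)
    have h13 : (c1:ℂ) + 1 * c2 = (c1:ℂ) + c2 := by ring
    rw [h13] at hsum
    apply hsum.congr'
    filter_upwards [hne0, hgev] with z hz hz2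
    have hgH : g1 z ∈ UHalf := hm1 hz2.2
    have hg1ne : g1 z ≠ 0 := uHalf_ne_zero hgH
    show z * (g1 z - z) + (z / g1 z) * ((fun w => w * (g2 w - w)) (g1 z)) = z * (g2 (g1 z) - z)
    simp only []
    field_simp
    ring
  have nG : Nice U (fun z => g2 (g1 z)) (c1 + c2) := by
    refine ⟨hUopen, diff_subset, hfar, ?_, ?_, ?_, ?_⟩
    · exact hg2.diff.comp (hg1.diff.mono hUsub1) hmapsU
    · intro a ha b hb hab
      exact hg1.inj (hUsub1 ha) (hUsub1 hb) (hg2.inj (hmapsU ha) (hmapsU hb) hab)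
    · rw [← Set.image_image, himg1, hg2.image]
    · have h14 : ((c1 + c2 : ℝ) : ℂ) = (c1:ℂ) + c2 := by push_cast; ring
      rw [h14]
      exact hnormG
  exact le_antisymm (Nice.key n nG) (Nice.key nG n)
end

section
/- If K₁ ⊂ K₂ or K₁ ≺ K₂ (K₁ is a quotient hull of K₂), then hcap(K₁) ≤ hcap(K₂). -/
open Set Filter

section AbsCompat

/-- Compatibility: the complex absolute value, as the norm bundled as an absolute value. -/
noncomputable def Complex.abs : AbsoluteValue ℂ ℝ := NormedField.toAbsoluteValue ℂ

lemma Complex.norm_eq_abs (z : ℂ) : ‖z‖ = Complex.abs z := rfl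

lemma Complex.abs_conj (z : ℂ) : Complex.abs ((starRingEnd ℂ) z) = Complex.abs z :=
  Complex.norm_conj z

lemma Complex.sq_abs (z : ℂ) : Complex.abs z ^ 2 = Complex.normSq z := Complex.sq_norm z

lemma Complex.abs_I : Complex.abs Complex.I = 1 := Complex.norm_I

lemma Complex.abs_ofReal (r : ℝ) : Complex.abs (r : ℂ) = |r| := by
  rw [← Complex.norm_eq_abs, Complex.norm_real, Real.norm_eq_abs]

lemma Complex.abs_two : Complex.abs 2 = 2 := by
  rw [← Complex.norm_eq_abs]; norm_num

lemma Complex.abs_im_le_abs (z : ℂ) : |z.im| ≤ Complex.abs z := Complex.abs_im_le_norm z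

lemma Complex.abs_le_abs_of_mapsTo_ball_self {f : ℂ → ℂ} {z : ℂ}
    (hd : DifferentiableOn ℂ f (Metric.ball 0 1))
    (h_maps : MapsTo f (Metric.ball 0 1) (Metric.ball 0 1)) (h₀ : f 0 = 0)
    (hz : Complex.abs z < 1) : Complex.abs (f z) ≤ Complex.abs z :=
  Complex.norm_le_norm_of_mapsTo_ball hd (h_maps.mono_right Metric.ball_subset_closedBall) h₀ hz

end AbsCompat

section AuxHcap

open Metric

local notation "conj'" => (starRingEnd ℂ)

lemma uhalf_open : IsOpen UHalf := isOpen_lt continuous_const Complex.continuous_im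

lemma mem_uhalf_iff {z : ℂ} : z ∈ UHalf ↔ 0 < z.im := Iff.rfl

/-- The Möbius map of the unit disk sending `p` to `0`. -/
noncomputable def mob (p z : ℂ) : ℂ := (z - p) / (1 - conj' p * z)

lemma normSq_mob_identity (p z : ℂ) :
    Complex.normSq (1 - conj' p * z) - Complex.normSq (z - p)
      = (1 - Complex.normSq p) * (1 - Complex.normSq z) := by
  simp only [Complex.normSq_apply, Complex.sub_re, Complex.sub_im, Complex.mul_re,
    Complex.mul_im, Complex.one_re, Complex.one_im, Complex.conj_re, Complex.conj_im]
  ring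

lemma mob_denom_ne {p z : ℂ} (hp : Complex.abs p < 1) (hz : Complex.abs z < 1) :
    1 - conj' p * z ≠ 0 := by
  intro h
  rw [sub_eq_zero] at h
  have : Complex.abs (conj' p * z) < 1 := by
    rw [map_mul, Complex.abs_conj]
    calc Complex.abs p * Complex.abs z ≤ Complex.abs p * 1 :=
          mul_le_mul_of_nonneg_left hz.le (Complex.abs.nonneg p)
    _ = Complex.abs p := mul_one _
    _ < 1 := hp
  rw [← h] at this
  simp at this

lemma mob_lt_one {p z : ℂ} (hp : Complex.abs p < 1) (hz : Complex.abs z < 1) :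
    Complex.abs (mob p z) < 1 := by
  have hne := mob_denom_ne hp hz
  have hpos : 0 < Complex.abs (1 - conj' p * z) := by
    simpa [Complex.abs.pos_iff] using hne
  rw [mob, map_div₀, div_lt_one hpos]
  have h2 : Complex.normSq (z - p) < Complex.normSq (1 - conj' p * z) := by
    have h3 : 0 < (1 - Complex.normSq p) * (1 - Complex.normSq z) := by
      apply mul_pos <;> rw [sub_pos, ← Complex.sq_abs] <;> nlinarith [Complex.abs.nonneg p, Complex.abs.nonneg z]
    nlinarith [normSq_mob_identity p z]
  rw [← Complex.sq_abs, ← Complex.sq_abs] at h2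
  exact lt_of_pow_lt_pow_left₀ 2 (Complex.abs.nonneg _) h2

lemma mob_zero {a : ℂ} : mob (-a) 0 = a := by
  simp [mob]

lemma mob_self {a : ℂ} : mob a a = 0 := by
  simp [mob]

lemma mob_inv {p z : ℂ} (hp : Complex.abs p < 1) (hz : Complex.abs z < 1) :
    mob (-p) (mob p z) = z := by
  have h1 : 1 - conj' p * z ≠ 0 := mob_denom_ne hp hz
  have h2 : 1 - conj' (-p) * mob p z ≠ 0 :=
    mob_denom_ne (by simpa using hp) (mob_lt_one hp hz)
  rw [mob, div_eq_iff h2]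
  rw [mob] at h2 ⊢
  have h1' : 1 - z * conj' p ≠ 0 := by rwa [mul_comm]
  field_simp at h2 ⊢
  rw [map_neg]
  ring

lemma mem_ball01 {z : ℂ} : z ∈ ball (0:ℂ) 1 ↔ Complex.abs z < 1 := by
  simp [mem_ball_zero_iff, Complex.norm_eq_abs]

lemma mob_diffOn {p : ℂ} (hp : Complex.abs p < 1) :
    DifferentiableOn ℂ (mob p) (ball (0:ℂ) 1) := by
  apply DifferentiableOn.div
  · exact (differentiable_id.sub_const p).differentiableOn
  · exact (differentiable_const _ |>.sub ((differentiable_id).const_mul _)).differentiableOn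
  · intro z hz; exact mob_denom_ne hp (mem_ball01.1 hz)

/-- Schwarz–Pick on the unit disk. -/
lemma disk_pick {f : ℂ → ℂ} (hd : DifferentiableOn ℂ f (ball (0:ℂ) 1))
    (hm : MapsTo f (ball (0:ℂ) 1) (ball (0:ℂ) 1)) {a b : ℂ}
    (ha : a ∈ ball (0:ℂ) 1) (hb : b ∈ ball (0:ℂ) 1) :
    Complex.abs (mob (f a) (f b)) ≤ Complex.abs (mob a b) := by
  have ha' := mem_ball01.1 ha
  have hb' := mem_ball01.1 hb
  have hfa' := mem_ball01.1 (hm ha)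
  have hmna : MapsTo (mob (-a)) (ball (0:ℂ) 1) (ball (0:ℂ) 1) := fun z hz =>
    mem_ball01.2 (mob_lt_one (by simpa using ha') (mem_ball01.1 hz))
  have hmfa : MapsTo (mob (f a)) (ball (0:ℂ) 1) (ball (0:ℂ) 1) := fun z hz =>
    mem_ball01.2 (mob_lt_one hfa' (mem_ball01.1 hz))
  set G : ℂ → ℂ := fun w => mob (f a) (f (mob (-a) w)) with hG
  have hGd : DifferentiableOn ℂ G (ball (0:ℂ) 1) := by
    exact ((mob_diffOn hfa').comp (hd.comp (mob_diffOn (by simpa using ha')) hmna)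
      (hm.comp hmna))
  have hGm : MapsTo G (ball (0:ℂ) 1) (ball (0:ℂ) 1) :=
    (hmfa.comp (hm.comp hmna))
  have hG0 : G 0 = 0 := by rw [hG]; simp only [mob_zero, mob_self]
  have key := Complex.abs_le_abs_of_mapsTo_ball_self hGd hGm hG0
    (z := mob a b) (mob_lt_one ha' hb')
  simp only [hG, mob_inv ha' hb'] at key
  exact key

noncomputable def cay (z : ℂ) : ℂ := (z - Complex.I) / (z + Complex.I)
noncomputable def cayInv (w : ℂ) : ℂ := Complex.I * (1 + w) / (1 - w)

lemma add_I_ne {z : ℂ} (hz : z ∈ UHalf) : z + Complex.I ≠ 0 := by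
  intro h
  have : (z + Complex.I).im = 0 := by rw [h]; simp
  simp only [Complex.add_im, Complex.I_im] at this
  have : 0 < z.im := hz
  linarith

lemma cay_mem {z : ℂ} (hz : z ∈ UHalf) : cay z ∈ ball (0:ℂ) 1 := by
  rw [mem_ball01, cay, map_div₀, div_lt_one (by simpa [Complex.abs.pos_iff] using add_I_ne hz)]
  have h2 : Complex.normSq (z - Complex.I) < Complex.normSq (z + Complex.I) := by
    simp only [Complex.normSq_apply, Complex.sub_re, Complex.sub_im, Complex.add_re,
      Complex.add_im, Complex.I_re, Complex.I_im]
    have : 0 < z.im := hz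
    nlinarith
  rw [← Complex.sq_abs, ← Complex.sq_abs] at h2
  exact lt_of_pow_lt_pow_left₀ 2 (Complex.abs.nonneg _) h2

lemma one_sub_ne {w : ℂ} (hw : w ∈ ball (0:ℂ) 1) : 1 - w ≠ 0 := by
  intro h
  rw [sub_eq_zero] at h
  rw [mem_ball01, ← h] at hw
  simp at hw

lemma cayInv_mem {w : ℂ} (hw : w ∈ ball (0:ℂ) 1) : cayInv w ∈ UHalf := by
  have h1 : 1 - w ≠ 0 := one_sub_ne hw
  have : cayInv w = Complex.I * ((1 + w) / (1 - w)) := by rw [cayInv, mul_div_assoc]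
  rw [this]
  show 0 < (Complex.I * ((1 + w) / (1 - w))).im
  have h2 : (Complex.I * ((1 + w) / (1 - w))).im = ((1 + w) / (1 - w)).re := by
    simp [Complex.mul_im]
  rw [h2, Complex.div_re]
  have h3 : 0 < Complex.normSq (1 - w) := Complex.normSq_pos.2 h1
  have h4 : Complex.normSq w < 1 := by
    rw [← Complex.sq_abs]; nlinarith [mem_ball01.1 hw, Complex.abs.nonneg w]
  have h5 : (1 + w).re * (1 - w).re + (1 + w).im * (1 - w).im = 1 - Complex.normSq w := by
    simp [Complex.normSq_apply, Complex.add_re, Complex.add_im, Complex.sub_re, Complex.sub_im]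
    ring
  rw [← add_div, h5]
  exact div_pos (by linarith) h3

lemma cayInv_cay {z : ℂ} (hz : z ∈ UHalf) : cayInv (cay z) = z := by
  have h1 : z + Complex.I ≠ 0 := add_I_ne hz
  have h2 : 1 - cay z ≠ 0 := one_sub_ne (cay_mem hz)
  rw [cay] at h2 ⊢
  rw [cayInv, div_eq_iff h2]
  field_simp
  ring

lemma sub_conj_ne {p q : ℂ} (hp : p ∈ UHalf) (hq : q ∈ UHalf) : q - conj' p ≠ 0 := by
  intro h
  have : (q - conj' p).im = 0 := by rw [h]; simp
  simp only [Complex.sub_im, Complex.conj_im] at this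
  have h1 : 0 < p.im := hp
  have h2 : 0 < q.im := hq
  linarith

lemma cay_diffOn : DifferentiableOn ℂ cay UHalf := by
  apply DifferentiableOn.div
  · exact (differentiable_id.sub_const _).differentiableOn
  · exact (differentiable_id.add_const _).differentiableOn
  · exact fun z hz => add_I_ne hz

lemma cayInv_diffOn : DifferentiableOn ℂ cayInv (ball (0:ℂ) 1) := by
  apply DifferentiableOn.div
  · exact ((differentiable_const _).mul (differentiable_const _ |>.add differentiable_id)).differentiableOn
  · exact ((differentiable_const _).sub differentiable_id).differentiableOn
  · exact fun z hz => one_sub_ne hz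

/-- Key identity: the pseudo-hyperbolic distance transported by the Cayley transform. -/
lemma mob_cay_abs {p q : ℂ} (hp : p ∈ UHalf) (hq : q ∈ UHalf) :
    Complex.abs (mob (cay p) (cay q)) * Complex.abs (q - conj' p) = Complex.abs (q - p) := by
  have hp' : p + Complex.I ≠ 0 := add_I_ne hp
  have hq' : q + Complex.I ≠ 0 := add_I_ne hq
  have hqc : q - conj' p ≠ 0 := sub_conj_ne hp hq
  have hden : 1 - conj' (cay p) * cay q ≠ 0 :=
    mob_denom_ne (mem_ball01.1 (cay_mem hp)) (mem_ball01.1 (cay_mem hq))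
  have hpc : conj' p - Complex.I ≠ 0 := by
    intro h
    apply hp'
    have := congrArg conj' h
    simp only [map_sub, Complex.conj_conj, Complex.conj_I, map_zero, sub_neg_eq_add] at this
    exact this
  have hid : mob (cay p) (cay q)
      = -((q - p) * (conj' p - Complex.I)) / ((p + Complex.I) * (q - conj' p)) := by
    have e1 : cay q - cay p = 2*Complex.I*(q - p)/((q + Complex.I)*(p + Complex.I)) := by
      rw [cay, cay]; field_simp; ring
    have c1 : conj' (cay p) = ((conj' p) + Complex.I)/((conj' p) - Complex.I) := by
      rw [cay, map_div₀, map_sub, map_add, Complex.conj_I, sub_neg_eq_add, ← sub_eq_add_neg]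
    have e2 : (1 - conj' (cay p) * cay q) * (((conj' p) - Complex.I)*(q + Complex.I))
        = (-2*Complex.I) * (q - conj' p) := by
      calc (1 - conj' (cay p) * cay q) * (((conj' p) - Complex.I)*(q + Complex.I))
          = ((conj' p) - Complex.I)*(q+Complex.I)
            - (((conj' p + Complex.I)/(conj' p - Complex.I)) * ((q - Complex.I)/(q + Complex.I)))
              * ((conj' p - Complex.I)*(q+Complex.I)) := by rw [c1, cay]; ring
        _ = ((conj' p) - Complex.I)*(q+Complex.I) - (conj' p + Complex.I)*(q - Complex.I) := by
              rw [div_mul_div_comm, div_mul_cancel₀ _ (mul_ne_zero hpc hq')]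
        _ = (-2*Complex.I) * (q - conj' p) := by ring
    have e2' : 1 - conj' (cay p) * cay q
        = (-2*Complex.I) * (q - conj' p) / ((conj' p - Complex.I)*(q + Complex.I)) := by
      rw [eq_div_iff (mul_ne_zero hpc hq')]; exact e2
    rw [mob, e1, e2']
    field_simp [hqc, hpc, hq', hp', Complex.I_ne_zero]
  rw [hid, map_div₀, AbsoluteValue.map_neg, map_mul, map_mul]
  have habs : Complex.abs (conj' p - Complex.I) = Complex.abs (p + Complex.I) := by
    have : conj' p - Complex.I = conj' (p + Complex.I) := by
      simp [map_add, Complex.conj_I]; ring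
    rw [this, Complex.abs_conj]
  rw [habs]
  have h1 : Complex.abs (p + Complex.I) ≠ 0 := by simpa [Complex.abs.ne_zero_iff] using hp'
  have h2 : Complex.abs (q - conj' p) ≠ 0 := by simpa [Complex.abs.ne_zero_iff] using hqc
  field_simp

/-- Schwarz–Pick on the upper half-plane, product form. -/
lemma uhalf_pick {f : ℂ → ℂ} (hd : DifferentiableOn ℂ f UHalf)
    (hm : MapsTo f UHalf UHalf) {u v : ℂ} (hu : u ∈ UHalf) (hv : v ∈ UHalf) :
    Complex.abs (f u - f v) * Complex.abs (u - conj' v)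
      ≤ Complex.abs (u - v) * Complex.abs (f u - conj' (f v)) := by
  set fd : ℂ → ℂ := cay ∘ f ∘ cayInv with hfd
  have hcm : MapsTo cayInv (ball (0:ℂ) 1) UHalf := fun z hz => cayInv_mem hz
  have hcm2 : MapsTo cay UHalf (ball (0:ℂ) 1) := fun z hz => cay_mem hz
  have hfdd : DifferentiableOn ℂ fd (ball (0:ℂ) 1) :=
    cay_diffOn.comp (hd.comp cayInv_diffOn hcm) ((hm.comp hcm))
  have hfdm : MapsTo fd (ball (0:ℂ) 1) (ball (0:ℂ) 1) := hcm2.comp (hm.comp hcm)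
  have key := disk_pick hfdd hfdm (cay_mem hv) (cay_mem hu)
  have e1 : fd (cay v) = cay (f v) := by rw [hfd]; simp [Function.comp, cayInv_cay hv]
  have e2 : fd (cay u) = cay (f u) := by rw [hfd]; simp [Function.comp, cayInv_cay hu]
  rw [e1, e2] at key
  -- key : |mob (cay (f v)) (cay (f u))| ≤ |mob (cay v) (cay u)|
  have i1 := mob_cay_abs (hm hv) (hm hu)  -- |mob (cay fv) (cay fu)| * |fu - conj fv| = |fu - fv|
  have i2 := mob_cay_abs hv hu            -- |mob (cay v) (cay u)| * |u - conj v| = |u - v|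
  have n1 : (0:ℝ) ≤ Complex.abs (u - conj' v) := Complex.abs.nonneg _
  have n2 : (0:ℝ) ≤ Complex.abs (f u - conj' (f v)) := Complex.abs.nonneg _
  calc Complex.abs (f u - f v) * Complex.abs (u - conj' v)
      = Complex.abs (mob (cay (f v)) (cay (f u))) * Complex.abs (f u - conj' (f v))
          * Complex.abs (u - conj' v) := by rw [i1]
    _ ≤ Complex.abs (mob (cay v) (cay u)) * Complex.abs (f u - conj' (f v))
          * Complex.abs (u - conj' v) := by
        apply mul_le_mul_of_nonneg_right _ n1
        exact mul_le_mul_of_nonneg_right key n2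
    _ = Complex.abs (mob (cay v) (cay u)) * Complex.abs (u - conj' v)
          * Complex.abs (f u - conj' (f v)) := by ring
    _ = Complex.abs (u - v) * Complex.abs (f u - conj' (f v)) := by rw [i2]

lemma two_pts {z₀ : ℂ} {ε : ℝ} (hε : 0 < ε) :
    z₀ + ((ε/2 : ℝ) : ℂ) ∈ Metric.ball z₀ ε ∧ z₀ + ((ε/2 : ℝ) : ℂ) ≠ z₀ := by
  constructor
  · rw [Metric.mem_ball, dist_eq_norm, add_sub_cancel_left, Complex.norm_real]
    rw [Real.norm_eq_abs, abs_of_pos (by linarith)]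
    linarith
  · intro h
    rw [add_eq_left] at h
    have : (ε/2 : ℝ) = 0 := by exact_mod_cast h
    linarith

/-- The inverse of an injective holomorphic function on an open preconnected set is holomorphic
on the image. -/
theorem inv_holo {D : Set ℂ} (hD : IsOpen D) (hDc : IsPreconnected D) {g : ℂ → ℂ}
    (hd : DifferentiableOn ℂ g D) (hi : InjOn g D) :
    DifferentiableOn ℂ (Function.invFunOn g D) (g '' D) := by
  rcases D.eq_empty_or_nonempty with rfl | hne
  · simp only [Set.image_empty]
    exact differentiableOn_empty
  set φ := Function.invFunOn g D with hφ
  have hright : ∀ w ∈ g '' D, g (φ w) = w := by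
    rintro w ⟨z, hz, rfl⟩
    exact Function.invFunOn_eq ⟨z, hz, rfl⟩
  have hφmem : ∀ w ∈ g '' D, φ w ∈ D := by
    rintro w ⟨z, hz, rfl⟩
    exact Function.invFunOn_mem ⟨z, hz, rfl⟩
  have hleft : ∀ z ∈ D, φ (g z) = z := fun z hz => hi.leftInvOn_invFunOn hz
  have han : AnalyticOnNhd ℂ g D := hd.analyticOnNhd hD
  -- g is an open map on D
  have hopen : ∀ s ⊆ D, IsOpen s → IsOpen (g '' s) := by
    rcases han.is_constant_or_isOpen hDc with ⟨w, hw⟩ | h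
    · exfalso
      obtain ⟨z₀, hz₀⟩ := hne
      obtain ⟨ε, hε, hball⟩ := Metric.isOpen_iff.1 hD z₀ hz₀
      have h1 : z₀ + ((ε/2 : ℝ) : ℂ) ∈ D := hball (two_pts hε).1
      have h2 : g z₀ = g (z₀ + ((ε/2 : ℝ) : ℂ)) := by rw [hw z₀ hz₀, hw _ h1]
      exact (two_pts hε).2 (hi h1 hz₀ h2.symm)
    · exact h
  have himgopen : IsOpen (g '' D) := hopen D subset_rfl hD
  -- continuity of the inverse
  have hφcont : ∀ w ∈ g '' D, ContinuousAt φ w := by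
    intro w hw
    show Tendsto φ (nhds w) (nhds (φ w))
    rw [_root_.tendsto_nhds]
    intro V hV hφV
    have hopenV : IsOpen (g '' (V ∩ D)) := hopen (V ∩ D) inter_subset_right (hV.inter hD)
    have hwV : w ∈ g '' (V ∩ D) := ⟨φ w, ⟨hφV, hφmem w hw⟩, hright w hw⟩
    filter_upwards [hopenV.mem_nhds hwV] with y hy
    obtain ⟨z, hz, rfl⟩ := hy
    show φ (g z) ∈ V
    rw [hleft z hz.2]
    exact hz.1
  -- the critical set is countable
  set S : Set ℂ := {z | z ∈ D ∧ deriv g z = 0} with hS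
  have hSc : S.Countable := by
    have hiso : ∀ z₀ ∈ S, nhdsWithin z₀ {z₀}ᶜ ⊓ 𝓟 S = ⊥ := by
      intro z₀ hz₀
      have hda : AnalyticAt ℂ (deriv g) z₀ := (han.deriv_of_isOpen hD) z₀ hz₀.1
      rcases hda.eventually_eq_zero_or_eventually_ne_zero with hcase | hcase
      · exfalso
        obtain ⟨ε, hε, hball⟩ := Metric.isOpen_iff.1 hD z₀ hz₀.1
        obtain ⟨δ, hδ, hsmall⟩ := Metric.eventually_nhds_iff.1 hcase
        set r := min ε δ with hr
        have hrpos : 0 < r := lt_min hε hδ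
        have hballD : ball z₀ r ⊆ D := fun x hx => hball (ball_subset_ball (min_le_left _ _) hx)
        have hzero : ∀ x ∈ ball z₀ r, fderivWithin ℂ g (ball z₀ r) x = 0 := by
          intro x hx
          rw [fderivWithin_of_isOpen isOpen_ball hx]
          have hdz : deriv g x = 0 := hsmall (lt_of_lt_of_le (mem_ball.1 hx) (min_le_right _ _))
          apply ContinuousLinearMap.ext_ring
          rw [ContinuousLinearMap.zero_apply, fderiv_apply_one_eq_deriv]
          exact hdz
        have hconst := (convex_ball z₀ r).is_const_of_fderivWithin_eq_zero
          (hd.mono hballD) hzero (mem_ball_self hrpos)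
          (y := z₀ + ((r/2 : ℝ) : ℂ)) (two_pts hrpos).1
        exact (two_pts hrpos).2
          (hi (hballD (two_pts hrpos).1) (hballD (mem_ball_self hrpos)) hconst.symm)
      · rw [inf_principal_eq_bot]
        apply Filter.mem_of_superset hcase
        intro z hz hzS
        exact hz hzS.2
    have : DiscreteTopology ↥S := discreteTopology_subtype_iff.2 hiso
    have : Countable ↥S := TopologicalSpace.separableSpace_iff_countable.1 inferInstance
    exact Set.countable_coe_iff.1 this
  have hTc : (g '' S).Countable := hSc.image g
  -- differentiability off the countable set
  have hdiffat : ∀ w ∈ (g '' D) \ (g '' S), DifferentiableAt ℂ φ w := by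
    rintro w ⟨hw, hwT⟩
    have hzD := hφmem w hw
    have hgz := hright w hw
    have hz_not : deriv g (φ w) ≠ 0 := by
      intro h0
      exact hwT ⟨φ w, ⟨hzD, h0⟩, hgz⟩
    have hder : HasDerivAt g (deriv g (φ w)) (φ w) :=
      (hd.differentiableAt (hD.mem_nhds hzD)).hasDerivAt
    have hinv : ∀ᶠ y in nhds w, g (φ y) = y :=
      eventually_of_mem (himgopen.mem_nhds hw) hright
    exact (HasDerivAt.of_local_left_inverse (hφcont w hw) hder hz_not hinv).differentiableAt
  -- conclude via removable-singularity type theorem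
  intro w₀ hw₀
  obtain ⟨r, hr, hsub⟩ := nhds_basis_closedBall.mem_iff.1 (himgopen.mem_nhds hw₀)
  have hrc : (r.toNNReal : ℝ) = r := Real.coe_toNNReal r hr.le
  have hc : ContinuousOn φ (closedBall w₀ r) := fun x hx =>
    (hφcont x (hsub hx)).continuousWithinAt
  have hd' : ∀ z ∈ ball w₀ r \ (g '' S), DifferentiableAt ℂ φ z := fun z hz =>
    hdiffat z ⟨hsub (ball_subset_closedBall hz.1), hz.2⟩
  have hps := Complex.hasFPowerSeriesOnBall_of_differentiable_off_countable
    (R := r.toNNReal) (c := w₀) hTc (by rwa [hrc]) (by rw [hrc]; exact hd')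
    (by simpa using hr)
  exact hps.analyticAt.differentiableAt.differentiableWithinAt

/-- Core. -/
theorem core_hcap {K2 : Set ℂ} {g2 : ℂ → ℂ} {c2 : ℝ} (h2 : IsHHull K2)
    (hg2 : IsLoewnerMapOf K2 g2 c2) {ψ : ℂ → ℂ} {c : ℝ}
    (hψd : DifferentiableOn ℂ ψ (UHalf \ K2)) (hψm : MapsTo ψ (UHalf \ K2) UHalf)
    (hψt : Tendsto (fun z => z * (ψ z - z))
      ((Bornology.cobounded ℂ) ⊓ Filter.principal (UHalf \ K2)) (nhds (c:ℂ))) :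
    c ≤ c2 := by
  set D : Set ℂ := UHalf \ K2 with hDdef
  have hDopen : IsOpen D := by
    have hDeq : D = UHalf ∩ (closure K2)ᶜ := by
      ext z
      constructor
      · rintro ⟨hz1, hz2⟩
        exact ⟨hz1, fun hc => hz2 (by rw [← h2.rel_closed]; exact ⟨hc, hz1⟩)⟩
      · rintro ⟨hz1, hz2⟩
        exact ⟨hz1, fun hk => hz2 (subset_closure hk)⟩
    rw [hDeq]
    exact uhalf_open.inter (isOpen_compl_iff.2 isClosed_closure)
  have hDconn : IsPreconnected D := by
    haveI := h2.simply_connected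
    haveI : PathConnectedSpace ↥(UHalf \ K2) := inferInstance
    exact (isPathConnected_iff_pathConnectedSpace.2 this).isConnected.isPreconnected
  set φ : ℂ → ℂ := Function.invFunOn g2 D with hφdef
  have himg : g2 '' D = UHalf := hg2.image
  have hφd : DifferentiableOn ℂ φ UHalf := by
    rw [← himg]; exact inv_holo hDopen hDconn hg2.diff hg2.inj
  have hφm : MapsTo φ UHalf D := by
    intro w hw
    rw [← himg] at hw
    obtain ⟨z, hz, rfl⟩ := hw
    exact Function.invFunOn_mem ⟨z, hz, rfl⟩
  have hright : ∀ w ∈ UHalf, g2 (φ w) = w := by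
    intro w hw
    rw [← himg] at hw
    obtain ⟨z, hz, rfl⟩ := hw
    exact Function.invFunOn_eq ⟨z, hz, rfl⟩
  have hleft : ∀ z ∈ D, φ (g2 z) = z := fun z hz => hg2.inj.leftInvOn_invFunOn hz
  have hφm' : MapsTo φ UHalf UHalf := fun w hw => (hφm hw).1
  obtain ⟨R, hR⟩ := h2.bounded.subset_ball 0
  -- facts about I * y
  have hIyU : ∀ y : ℝ, 0 < y → Complex.I * (y:ℂ) ∈ UHalf := by
    intro y hy
    show 0 < (Complex.I * (y:ℂ)).im
    simp [Complex.mul_im]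
    exact hy
  have hIyD : ∀ᶠ y : ℝ in atTop, Complex.I * (y:ℂ) ∈ D := by
    filter_upwards [eventually_gt_atTop (max R 0)] with y hy
    have hy0 : 0 < y := lt_of_le_of_lt (le_max_right R 0) hy
    refine ⟨hIyU y hy0, fun hK => ?_⟩
    have := hR hK
    rw [mem_ball, dist_zero_right, Complex.norm_eq_abs] at this
    have habs : Complex.abs (Complex.I * (y:ℂ)) = y := by
      rw [map_mul, Complex.abs_I, Complex.abs_ofReal, one_mul, abs_of_pos hy0]
    rw [habs] at this
    exact absurd this (not_lt.2 (le_of_lt (lt_of_le_of_lt (le_max_left R 0) hy)))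
  have hIy_tend : Tendsto (fun y : ℝ => Complex.I * (y:ℂ)) atTop
      ((Bornology.cobounded ℂ) ⊓ Filter.principal D) := by
    refine tendsto_inf.2 ⟨?_, tendsto_principal.2 hIyD⟩
    rw [← tendsto_norm_atTop_iff_cobounded]
    refine tendsto_atTop_mono' _ ?_ tendsto_id
    filter_upwards [eventually_ge_atTop 0] with y hy
    simp only [id]
    rw [norm_mul, Complex.norm_eq_abs, Complex.norm_eq_abs, Complex.abs_I, Complex.abs_ofReal,
      one_mul, abs_of_nonneg hy]
  have hDU : (Bornology.cobounded ℂ) ⊓ Filter.principal D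
      ≤ (Bornology.cobounded ℂ) ⊓ Filter.principal UHalf :=
    inf_le_inf_left _ (principal_mono.2 diff_subset)
  have hζ : Tendsto (fun y : ℝ => (Complex.I * (y:ℂ)) * (g2 (Complex.I * y) - Complex.I * y))
      atTop (nhds (c2:ℂ)) := hg2.norm.comp (hIy_tend.mono_right hDU)
  set M : ℝ := |c2| + 1 with hM
  have hM1 : 1 ≤ M := by
    have := abs_nonneg c2
    linarith
  have hM0 : 0 < M := lt_of_lt_of_le one_pos hM1
  -- the error term e y = g2 (I y) - I y is O(1/y)
  have he_bound : ∀ᶠ y : ℝ in atTop,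
      Complex.abs (g2 (Complex.I * y) - Complex.I * y) ≤ M / y := by
    have hev := Metric.tendsto_nhds.1 hζ 1 one_pos
    filter_upwards [hev, eventually_gt_atTop 0] with y h1 h2
    rw [dist_eq_norm] at h1
    have hn : ‖(Complex.I * (y:ℂ)) * (g2 (Complex.I * y) - Complex.I * y)‖ ≤ M := by
      calc ‖(Complex.I * (y:ℂ)) * (g2 (Complex.I * y) - Complex.I * y)‖
          ≤ ‖((c2:ℝ):ℂ)‖ + ‖(Complex.I * (y:ℂ)) * (g2 (Complex.I * y) - Complex.I * y) - ((c2:ℝ):ℂ)‖ := norm_le_insert' _ _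
        _ ≤ |c2| + 1 := by
            rw [Complex.norm_real, Real.norm_eq_abs]
            linarith
    rw [norm_mul, Complex.norm_eq_abs, Complex.norm_eq_abs, map_mul, Complex.abs_I,
      Complex.abs_ofReal, one_mul, abs_of_pos h2] at hn
    rw [le_div_iff₀ h2]
    nlinarith
  -- Schwarz–Pick for φ gives: φ (I y) is close to I y
  have hd4 : ∀ᶠ y : ℝ in atTop,
      Complex.abs (φ (Complex.I * y) - Complex.I * y) ≤ 4 * M / y := by
    filter_upwards [hIyD, he_bound, eventually_ge_atTop (max (2*M) 2)] with y h1 h2 h3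
    have hy2 : (2:ℝ) ≤ y := le_trans (le_max_right _ _) h3
    have hy2M : 2*M ≤ y := le_trans (le_max_left _ _) h3
    have hy0 : (0:ℝ) < y := lt_of_lt_of_le two_pos hy2
    have hu : Complex.I * (y:ℂ) ∈ UHalf := hIyU y hy0
    set w : ℂ := g2 (Complex.I * y) with hwdef
    have hwU : w ∈ UHalf := by rw [← himg]; exact ⟨_, h1, rfl⟩
    have pick := uhalf_pick hφd hφm' hu hwU
    rw [hleft _ h1] at pick
    set d : ℝ := Complex.abs (φ (Complex.I * y) - Complex.I * y) with hddef
    have hd0 : 0 ≤ d := Complex.abs.nonneg _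
    have hMy : M / y ≤ 1/2 := by
      rw [div_le_iff₀ hy0]
      linarith
    have hwim : y - M/y ≤ w.im := by
      have him1 : |(w - Complex.I * y).im| ≤ Complex.abs (w - Complex.I * y) :=
        Complex.abs_im_le_abs _
      have him2 : -(M/y) ≤ (w - Complex.I * y).im := (abs_le.1 (le_trans him1 h2)).1
      have him : (Complex.I * ((y:ℝ):ℂ)).im = y := by simp
      rw [Complex.sub_im, him] at him2
      linarith
    have hlb : y ≤ Complex.abs (Complex.I * (y:ℂ) - conj' w) := by
      have heq : (Complex.I * (y:ℂ) - conj' w).im = y + w.im := by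
        rw [Complex.sub_im, Complex.conj_im]
        simp
      have h5 : |(Complex.I * (y:ℂ) - conj' w).im| ≤ Complex.abs (Complex.I * (y:ℂ) - conj' w) :=
        Complex.abs_im_le_abs _
      rw [heq, abs_of_pos (by nlinarith)] at h5
      nlinarith
    have hub : Complex.abs (Complex.I * (y:ℂ) - w) ≤ M / y := by
      rw [← AbsoluteValue.map_neg, neg_sub]
      exact h2
    have hub2 : Complex.abs (φ (Complex.I * y) - conj' (Complex.I * (y:ℂ))) ≤ d + 2*y := by
      have hsplit : φ (Complex.I * y) - conj' (Complex.I * (y:ℂ))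
          = (φ (Complex.I * y) - Complex.I * y) + (Complex.I * y - conj' (Complex.I * (y:ℂ))) := by
        ring
      rw [hsplit]
      refine le_trans (Complex.abs.add_le _ _) ?_
      have h2Iy : Complex.I * (y:ℂ) - conj' (Complex.I * (y:ℂ)) = 2 * Complex.I * y := by
        rw [map_mul, Complex.conj_I, Complex.conj_ofReal]
        ring
      rw [h2Iy, map_mul, map_mul, Complex.abs_I, Complex.abs_ofReal, Complex.abs_two,
        abs_of_pos hy0]
      simp only [one_mul, mul_one]
      linarith
    have key : d * y ≤ (M/y) * (d + 2*y) := by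
      calc d * y ≤ d * Complex.abs (Complex.I * (y:ℂ) - conj' w) :=
            mul_le_mul_of_nonneg_left hlb hd0
        _ ≤ Complex.abs (Complex.I * (y:ℂ) - w) * Complex.abs (φ (Complex.I * y) - conj' (Complex.I * (y:ℂ))) := pick
        _ ≤ (M/y) * (d + 2*y) :=
            mul_le_mul hub hub2 (Complex.abs.nonneg _) (by positivity)
    have hq : M/y*(d + 2*y) = (M/y)*d + 2*M := by field_simp
    rw [hq] at key
    have hq2 : (M/y)*d ≤ (1/2)*d := mul_le_mul_of_nonneg_right hMy hd0
    have hq3 : d*2 ≤ d*y := mul_le_mul_of_nonneg_left hy2 hd0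
    rw [le_div_iff₀ hy0]
    linarith
  -- z_y := φ (I y) tends to infinity within D
  have hzdiff : Tendsto (fun y : ℝ => φ (Complex.I * y) - Complex.I * y) atTop (nhds 0) := by
    apply squeeze_zero_norm' (a := fun y : ℝ => 4 * M / y)
      (by filter_upwards [hd4] with y hy; rwa [Complex.norm_eq_abs])
      (Tendsto.div_atTop tendsto_const_nhds tendsto_id)
  have hznorm : Tendsto (fun y : ℝ => φ (Complex.I * y)) atTop (Bornology.cobounded ℂ) := by
    rw [← tendsto_norm_atTop_iff_cobounded]
    refine tendsto_atTop_mono' _ ?_ (tendsto_atTop_add_const_right _ (-1) tendsto_id)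
    have hzd1 : ∀ᶠ y : ℝ in atTop, ‖φ (Complex.I * y) - Complex.I * y‖ ≤ 1 := by
      have hno := hzdiff.norm
      rw [norm_zero] at hno
      exact hno.eventually (eventually_le_nhds one_pos)
    filter_upwards [hzd1, eventually_ge_atTop 0] with y h1 h2
    have hineq : ‖Complex.I * (y:ℂ)‖ - ‖φ (Complex.I * y)‖ ≤ 1 := by
      refine le_trans ?_ h1
      rw [← norm_neg (φ (Complex.I * y) - Complex.I * y), neg_sub]
      exact norm_sub_norm_le _ _
    have hnIy : ‖Complex.I * (y:ℂ)‖ = y := by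
      rw [norm_mul, Complex.norm_eq_abs, Complex.norm_eq_abs, Complex.abs_I, Complex.abs_ofReal,
        one_mul, abs_of_nonneg h2]
    rw [hnIy] at hineq
    simp only [id_eq]
    linarith
  have hzD : ∀ᶠ y : ℝ in atTop, φ (Complex.I * y) ∈ D := by
    filter_upwards [eventually_gt_atTop 0] with y hy
    exact hφm (hIyU y hy)
  have hz_tend : Tendsto (fun y : ℝ => φ (Complex.I * y)) atTop
      ((Bornology.cobounded ℂ) ⊓ Filter.principal D) :=
    tendsto_inf.2 ⟨hznorm, tendsto_principal.2 hzD⟩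
  have hlimpsi : Tendsto (fun y : ℝ => φ (Complex.I * y) * (ψ (φ (Complex.I * y)) - φ (Complex.I * y)))
      atTop (nhds (c:ℂ)) := hψt.comp hz_tend
  have hlimg2 : Tendsto (fun y : ℝ => φ (Complex.I * y) * (g2 (φ (Complex.I * y)) - φ (Complex.I * y)))
      atTop (nhds (c2:ℂ)) := hg2.norm.comp (hz_tend.mono_right hDU)
  -- y / φ(I y) → -I
  have hinv0 : Tendsto (fun y : ℝ => ((y:ℂ))⁻¹) atTop (nhds 0) := by
    have h0 := tendsto_inv_atTop_zero (𝕜 := ℝ)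
    have h1 := (Complex.continuous_ofReal.tendsto 0).comp h0
    rw [Complex.ofReal_zero] at h1
    refine h1.congr fun y => ?_
    simp [Complex.ofReal_inv, Function.comp]
  have hzne : ∀ᶠ y : ℝ in atTop, φ (Complex.I * y) ≠ 0 := by
    have hno := hznorm
    rw [← tendsto_norm_atTop_iff_cobounded] at hno
    filter_upwards [hno.eventually_ge_atTop 1] with y hy
    intro h0
    rw [h0, norm_zero] at hy
    linarith
  have hyz : Tendsto (fun y : ℝ => (y:ℂ) / φ (Complex.I * y)) atTop (nhds (-Complex.I)) := by
    have step1 : Tendsto (fun y : ℝ => φ (Complex.I * y) / y) atTop (nhds Complex.I) := by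
      have hmul : Tendsto (fun y : ℝ => (φ (Complex.I * y) - Complex.I * y) * ((y:ℂ))⁻¹ + Complex.I)
          atTop (nhds Complex.I) := by
        have ht := hzdiff.mul hinv0
        rw [zero_mul] at ht
        have ht2 := ht.add_const Complex.I
        rwa [zero_add] at ht2
      refine hmul.congr' ?_
      filter_upwards [eventually_gt_atTop 0] with y hy
      have hy0 : (y:ℂ) ≠ 0 := by exact_mod_cast hy.ne'
      field_simp
      ring
    have := step1.inv₀ Complex.I_ne_zero
    rw [Complex.inv_I] at this
    refine this.congr' ?_
    filter_upwards [] with y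
    rw [inv_div]
  have hterm1 : Tendsto (fun y : ℝ => (y:ℂ) * (g2 (φ (Complex.I * y)) - φ (Complex.I * y)))
      atTop (nhds (-Complex.I * c2)) := by
    refine (hyz.mul hlimg2).congr' ?_
    filter_upwards [hzne, eventually_gt_atTop 0] with y h1 hy
    rw [div_mul_eq_mul_div, mul_left_comm, mul_div_cancel_left₀ _ h1]
  have hterm2 : Tendsto (fun y : ℝ => (y:ℂ) * (ψ (φ (Complex.I * y)) - φ (Complex.I * y)))
      atTop (nhds (-Complex.I * c)) := by
    refine (hyz.mul hlimpsi).congr' ?_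
    filter_upwards [hzne, eventually_gt_atTop 0] with y h1 hy
    rw [div_mul_eq_mul_div, mul_left_comm, mul_div_cancel_left₀ _ h1]
  -- first asymptotic: y (y - Im ψ(φ(I y))) → c - c2
  have hL1 : Tendsto (fun y : ℝ => y * (y - (ψ (φ (Complex.I * y))).im)) atTop
      (nhds (c - c2)) := by
    have him := ((Complex.continuous_im.tendsto _).comp hterm1).sub
      ((Complex.continuous_im.tendsto _).comp hterm2)
    have hlv : (-Complex.I * (c2:ℂ)).im - (-Complex.I * (c:ℂ)).im = c - c2 := by
      simp [Complex.mul_im]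
      ring
    rw [hlv] at him
    refine him.congr' ?_
    filter_upwards [eventually_gt_atTop 0] with y hy
    have hg2z : g2 (φ (Complex.I * y)) = Complex.I * y := hright _ (hIyU y hy)
    simp only [Function.comp]
    rw [hg2z]
    have e1 : ((y:ℂ) * (Complex.I * y - φ (Complex.I * y))).im
        = y * ((Complex.I * ((y:ℝ):ℂ)).im - (φ (Complex.I * y)).im) := by
      simp [Complex.mul_im]
    have e2 : ((y:ℂ) * (ψ (φ (Complex.I * y)) - φ (Complex.I * y))).im
        = y * ((ψ (φ (Complex.I * y))).im - (φ (Complex.I * y)).im) := by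
      simp [Complex.mul_im]
    rw [e1, e2]
    have e3 : (Complex.I * ((y:ℝ):ℂ)).im = y := by simp
    rw [e3]
    ring
  have h2y : Tendsto (fun y : ℝ => 2 * y) atTop atTop := by
    exact (tendsto_id (α := ℝ)).const_mul_atTop two_pos
  have hL2 : Tendsto (fun y : ℝ => (2*y) * (2*y - (ψ (φ (Complex.I * ((2*y : ℝ):ℂ)))).im)) atTop
      (nhds (c - c2)) := hL1.comp h2y
  -- Schwarz–Pick for F = ψ ∘ φ at the points 2iy, iy
  have hFd : DifferentiableOn ℂ (fun w => ψ (φ w)) UHalf := hψd.comp hφd hφm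
  have hFm : MapsTo (fun w => ψ (φ w)) UHalf UHalf := hψm.comp hφm
  have hPick2 : ∀ᶠ y : ℝ in atTop,
      (ψ (φ (Complex.I * ((2*y : ℝ):ℂ)))).im ≤ 2 * (ψ (φ (Complex.I * y))).im := by
    filter_upwards [eventually_gt_atTop 0] with y hy
    have hu2 : Complex.I * ((2*y : ℝ):ℂ) ∈ UHalf := hIyU (2*y) (by linarith)
    have hu1 : Complex.I * (y:ℂ) ∈ UHalf := hIyU y hy
    have pick := uhalf_pick hFd hFm hu2 hu1
    set a : ℂ := ψ (φ (Complex.I * ((2*y : ℝ):ℂ))) with hadef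
    set b : ℂ := ψ (φ (Complex.I * (y:ℂ))) with hbdef
    have haU : a ∈ UHalf := hFm hu2
    have hbU : b ∈ UHalf := hFm hu1
    have habs1 : Complex.abs (Complex.I * ((2*y : ℝ):ℂ) - conj' (Complex.I * (y:ℂ))) = 3*y := by
      have : Complex.I * ((2*y : ℝ):ℂ) - conj' (Complex.I * (y:ℂ)) = Complex.I * ((3*y : ℝ):ℂ) := by
        rw [map_mul, Complex.conj_I, Complex.conj_ofReal]
        push_cast
        ring
      rw [this, map_mul, Complex.abs_I, Complex.abs_ofReal, one_mul, abs_of_pos (by linarith)]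
    have habs2 : Complex.abs (Complex.I * ((2*y : ℝ):ℂ) - Complex.I * (y:ℂ)) = y := by
      have : Complex.I * ((2*y : ℝ):ℂ) - Complex.I * (y:ℂ) = Complex.I * ((y : ℝ):ℂ) := by
        push_cast
        ring
      rw [this, map_mul, Complex.abs_I, Complex.abs_ofReal, one_mul, abs_of_pos hy]
    rw [habs1, habs2] at pick
    -- pick : |a - b| * (3y) ≤ y * |a - conj b|
    have h3 : 3 * Complex.abs (a - b) ≤ Complex.abs (a - conj' b) := by
      have hy' : 0 < y := hy
      nlinarith [Complex.abs.nonneg (a - b), Complex.abs.nonneg (a - conj' b)]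
    have h4 : Complex.abs (a - conj' b) ≤ Complex.abs (a - b) + 2 * b.im := by
      have hsplit : a - conj' b = (a - b) + (b - conj' b) := by ring
      rw [hsplit]
      refine le_trans (Complex.abs.add_le _ _) ?_
      have hbb : b - conj' b = 2 * b.im * Complex.I := by
        rw [Complex.sub_conj]
        push_cast
        ring
      rw [hbb, map_mul, map_mul, Complex.abs_I, Complex.abs_two, Complex.abs_ofReal, mul_one,
        abs_of_pos hbU]
    have h5 : Complex.abs (a - b) ≤ b.im := by linarith
    have h6 : a.im - b.im ≤ Complex.abs (a - b) := by
      have := Complex.abs_im_le_abs (a - b)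
      rw [Complex.sub_im] at this
      exact le_trans (le_abs_self _) this
    linarith
  -- conclusion
  have hfinal : Tendsto (fun y : ℝ =>
      (2*y) * (2*y - (ψ (φ (Complex.I * ((2*y : ℝ):ℂ)))).im)
        - 4 * (y * (y - (ψ (φ (Complex.I * y))).im))) atTop
      (nhds ((c - c2) - 4 * (c - c2))) := hL2.sub (hL1.const_mul 4)
  have hnn : ∀ᶠ y : ℝ in atTop, 0 ≤
      (2*y) * (2*y - (ψ (φ (Complex.I * ((2*y : ℝ):ℂ)))).im)
        - 4 * (y * (y - (ψ (φ (Complex.I * y))).im)) := by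
    filter_upwards [hPick2, eventually_gt_atTop 0] with y h1 hy
    nlinarith
  have := ge_of_tendsto hfinal hnn
  linarith


end AuxHcap

/-- Monotonicity of half-plane capacity: if `K₁ ⊆ K₂`, or if `K₁ ≺ K₂` (i.e. `K₁ = K₂/K₀ =
g_{K₀}(K₂ ∖ K₀)` for some hull `K₀ ⊆ K₂`), then `hcap K₁ ≤ hcap K₂`. -/
theorem hcap_mono
    (K1 K2 : Set ℂ) (g1 g2 : ℂ → ℂ) (c1 c2 : ℝ)
    (h1 : IsHHull K1) (h2 : IsHHull K2)
    (hg1 : IsLoewnerMapOf K1 g1 c1) (hg2 : IsLoewnerMapOf K2 g2 c2) :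
    (K1 ⊆ K2 → c1 ≤ c2) ∧
    (∀ (K0 : Set ℂ) (g0 : ℂ → ℂ) (c0 : ℝ), IsHHull K0 → IsLoewnerMapOf K0 g0 c0 →
      K0 ⊆ K2 → K1 = g0 '' (K2 \ K0) → c1 ≤ c2) := by
  constructor
  · -- inclusion case
    intro hsub
    have hsub' : UHalf \ K2 ⊆ UHalf \ K1 := diff_subset_diff_right hsub
    refine core_hcap h2 hg2 (hg1.diff.mono hsub') ?_ ?_
    · intro z hz
      rw [← hg1.image]
      exact ⟨z, hsub' hz, rfl⟩
    · exact hg1.norm.mono_left (inf_le_inf_left _ (principal_mono.2 diff_subset))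
  · -- quotient-hull case
    intro K0 g0 c0 h0 hg0 hK02 hK1eq
    -- positivity of c0
    have h00 : (0:ℝ) ≤ c0 := by
      refine core_hcap h0 hg0 (ψ := id) differentiableOn_id (fun z hz => hz.1) ?_
      have heq : (fun z : ℂ => z * (id z - z)) = fun _ => (((0:ℝ)):ℂ) := by
        funext z; simp
      rw [heq]
      exact tendsto_const_nhds
    -- the composed map g1 ∘ g0 is a candidate for the core lemma
    set l : Filter ℂ := (Bornology.cobounded ℂ) ⊓ Filter.principal (UHalf \ K2) with hl
    have hsub0 : UHalf \ K2 ⊆ UHalf \ K0 := diff_subset_diff_right hK02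
    have hg0m : MapsTo g0 (UHalf \ K2) (UHalf \ K1) := by
      intro z hz
      refine ⟨?_, ?_⟩
      · rw [← hg0.image]; exact ⟨z, hsub0 hz, rfl⟩
      · rw [hK1eq]
        rintro ⟨z', hz', he⟩
        have hz'D : z' ∈ UHalf \ K0 := ⟨h2.subset hz'.1, hz'.2⟩
        have := hg0.inj hz'D (hsub0 hz) he
        exact hz.2 (this ▸ hz'.1)
    have hψd : DifferentiableOn ℂ (fun z => g1 (g0 z)) (UHalf \ K2) :=
      hg1.diff.comp (hg0.diff.mono hsub0) hg0m
    have hψm : MapsTo (fun z => g1 (g0 z)) (UHalf \ K2) UHalf := by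
      intro z hz
      rw [← hg1.image]
      exact ⟨g0 z, hg0m hz, rfl⟩
    -- asymptotics of the composition
    have hmemD : ∀ᶠ z in l, z ∈ UHalf \ K2 :=
      (eventually_principal.2 (fun z hz => hz)).filter_mono inf_le_right
    have hzne : ∀ᶠ z in l, z ≠ 0 :=
      (Bornology.eventually_ne_cobounded (0:ℂ)).filter_mono inf_le_left
    have hA : Tendsto (fun z => z * (g0 z - z)) l (nhds (c0:ℂ)) :=
      hg0.norm.mono_left (inf_le_inf_left _ (principal_mono.2 diff_subset))
    have hzinv : Tendsto (fun z : ℂ => z⁻¹) l (nhds 0) :=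
      tendsto_inv₀_cobounded.mono_left inf_le_left
    have hg0sub : Tendsto (fun z => g0 z - z) l (nhds 0) := by
      have ht := hA.mul hzinv
      rw [mul_zero] at ht
      refine ht.congr' ?_
      filter_upwards [hzne] with z hz
      field_simp
    have hnorm_atTop : Tendsto (fun z : ℂ => ‖z‖) l atTop :=
      tendsto_norm_atTop_iff_cobounded.2 (tendsto_id.mono_left inf_le_left)
    have hg0cob : Tendsto g0 l (Bornology.cobounded ℂ) := by
      rw [← tendsto_norm_atTop_iff_cobounded]
      refine tendsto_atTop_mono' _ ?_ (tendsto_atTop_add_const_right _ (-1) hnorm_atTop)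
      have hev : ∀ᶠ z in l, ‖g0 z - z‖ ≤ 1 := by
        have hno := hg0sub.norm
        rw [norm_zero] at hno
        exact hno.eventually (eventually_le_nhds one_pos)
      filter_upwards [hev] with z hz
      have : ‖z‖ - ‖g0 z‖ ≤ 1 := by
        refine le_trans ?_ hz
        rw [← norm_neg (g0 z - z), neg_sub]
        exact norm_sub_norm_le _ _
      linarith
    have hg0U : ∀ᶠ z in l, g0 z ∈ UHalf := by
      filter_upwards [hmemD] with z hz
      exact (hg0m hz).1
    have hg0ne : ∀ᶠ z in l, g0 z ≠ 0 :=
      hg0cob.eventually_ne_cobounded 0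
    have hg0tend : Tendsto g0 l ((Bornology.cobounded ℂ) ⊓ Filter.principal UHalf) :=
      tendsto_inf.2 ⟨hg0cob, tendsto_principal.2 hg0U⟩
    have hB0 : Tendsto (fun z => g0 z * (g1 (g0 z) - g0 z)) l (nhds (c1:ℂ)) :=
      hg1.norm.comp hg0tend
    have hgratio : Tendsto (fun z => g0 z / z) l (nhds 1) := by
      have ht := (hg0sub.mul hzinv).add_const (1:ℂ)
      rw [mul_zero, zero_add] at ht
      refine ht.congr' ?_
      filter_upwards [hzne] with z hz
      field_simp
      ring
    have hfrac : Tendsto (fun z => z / g0 z) l (nhds 1) := by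
      have ht := hgratio.inv₀ one_ne_zero
      rw [inv_one] at ht
      refine ht.congr' ?_
      filter_upwards [] with z
      rw [inv_div]
    have hB : Tendsto (fun z => z * (g1 (g0 z) - g0 z)) l (nhds (c1:ℂ)) := by
      have ht := hfrac.mul hB0
      rw [one_mul] at ht
      refine ht.congr' ?_
      filter_upwards [hg0ne] with z hz
      field_simp
    have hψt : Tendsto (fun z => z * ((fun z => g1 (g0 z)) z - z)) l (nhds ((↑(c0 + c1) : ℂ))) := by
      have ht := hA.add hB
      push_cast
      refine ht.congr ?_
      intro z
      ring
    have big : c0 + c1 ≤ c2 := core_hcap h2 hg2 hψd hψm hψt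
    linarith
end

section
/- Let K be an ℍ-hull with extended conformal map f_K : Ĉ∖S_K → Ĉ∖K̂. Then f_K cannot be extended analytically to any strictly larger open subset of Ĉ; i.e., f_K has no analytic continuation across any point of its support S_K. -/
open Set Filter

/-- The real line, as a subset of `ℂ`. -/
def RLine : Set ℂ := {z : ℂ | z.im = 0}

/-- The double `K̂ = K ∪ I_ℝ(K) ∪ B_K` of an `ℍ`-hull `K`, where `I_ℝ` is complex conjugation
and `B_K = cl(K) ∩ ℝ` is the base. -/
def doubleHull (K : Set ℂ) : Set ℂ :=
  K ∪ (fun z => (starRingEnd ℂ) z) '' K ∪ (closure K ∩ RLine)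

/-- An `ℍ`-hull `K` together with its support `S = S_K ⊆ ℝ` and the Schwarz-reflected conformal
map `f = f_K : Ĉ ∖ S_K → Ĉ ∖ K̂` (with inverse `g = g_K`), normalized by `f(z) − z → 0` at `∞`,
restricting to the inverse Loewner map `ℍ → ℍ ∖ K`. -/
structure HullData where
  K : Set ℂ
  S : Set ℂ
  f : ℂ → ℂ
  g : ℂ → ℂ
  hull_subset : K ⊆ UHalf
  hull_bounded : Bornology.IsBounded K
  hull_rel_closed : closure K ∩ UHalf = K
  hull_simply_connected : SimplyConnectedSpace (UHalf \ K : Set ℂ)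
  S_compact : IsCompact S
  S_real : S ⊆ RLine
  f_diff : DifferentiableOn ℂ f Sᶜ
  f_inj : InjOn f Sᶜ
  f_image : f '' Sᶜ = (doubleHull K)ᶜ
  f_inv : Set.InvOn g f Sᶜ (doubleHull K)ᶜ
  f_norm : Tendsto (fun z => f z - z) (Bornology.cobounded ℂ) (nhds 0)
  f_maps : MapsTo f UHalf (UHalf \ K)
  f_surj_half : f '' (UHalf \ S) = UHalf \ K

/-- The reflected map `f_K : Ĉ ∖ S_K → Ĉ ∖ K̂` of an `ℍ`-hull cannot be continued analytically
to any strictly larger open set: no holomorphic function on an open set strictly containing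
`Ĉ ∖ S_K` agrees with `f_K` there. -/
theorem fK_no_analytic_extension (D : HullData)
    (U : Set ℂ) (hU : IsOpen U) (hss : D.Sᶜ ⊂ U) :
    ¬ ∃ h : ℂ → ℂ, DifferentiableOn ℂ h U ∧ Set.EqOn h D.f D.Sᶜ := by
  rintro ⟨h, hh, heq⟩
  -- basic facts
  have hSo : IsOpen D.Sᶜ := D.S_compact.isClosed.isOpen_compl
  have hUHsub : UHalf ⊆ D.Sᶜ := by
    intro z hz hzS
    have := D.S_real hzS
    simp only [RLine, mem_setOf_eq] at this
    simp only [UHalf, mem_setOf_eq] at hz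
    linarith
  -- the image of the upper half-plane is exactly `UHalf \ K`
  have himageH : D.f '' UHalf = UHalf \ D.K := by
    have hUS : UHalf \ D.S = UHalf := by
      ext z
      exact ⟨fun hz => hz.1, fun hz => ⟨hz, fun hzS => hUHsub hz hzS⟩⟩
    have := D.f_surj_half
    rw [hUS] at this
    exact this
  -- membership in the image
  have hmemim : ∀ z ∈ D.Sᶜ, D.f z ∈ (doubleHull D.K)ᶜ := by
    intro z hz
    rw [← D.f_image]; exact mem_image_of_mem _ hz
  -- L1: nonpositive imaginary part is preserved
  have L1 : ∀ z ∈ D.Sᶜ, z.im ≤ 0 → (D.f z).im ≤ 0 := by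
    intro z hz hzim
    by_contra hpos
    push_neg at hpos
    have hfz : D.f z ∈ UHalf \ D.K := by
      constructor
      · exact hpos
      · intro hK
        exact hmemim z hz (Or.inl (Or.inl hK))
    rw [← himageH] at hfz
    obtain ⟨u, hu, hfu⟩ := hfz
    have : u = z := D.f_inj (hUHsub hu) hz hfu
    rw [this] at hu
    simp only [UHalf, mem_setOf_eq] at hu
    linarith
  -- L3: on S ∩ U the extension has real values
  have L3 : ∀ x' ∈ U, x' ∈ D.S → (h x').im = 0 := by
    intro x' hx'U hx'S
    have hx'im : x'.im = 0 := D.S_real hx'S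
    have hcont : ContinuousAt h x' :=
      (hh.differentiableAt (hU.mem_nhds hx'U)).continuousAt
    have hseq : Tendsto (fun n : ℕ => ((1 : ℝ) / (n + 1) : ℝ)) atTop (nhds 0) :=
      tendsto_one_div_add_atTop_nhds_zero_nat
    have hseqC : Tendsto (fun n : ℕ => (((1 : ℝ) / (n + 1) : ℝ) : ℂ)) atTop (nhds 0) := by
      have := (Complex.continuous_ofReal.tendsto 0).comp hseq
      simpa [Function.comp_def] using this
    have hplus : Tendsto (fun n : ℕ => x' + Complex.I * (((1 : ℝ) / (n + 1) : ℝ) : ℂ))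
        atTop (nhds x') := by
      have := (hseqC.const_mul Complex.I).const_add x'
      simpa using this
    have hminus : Tendsto (fun n : ℕ => x' - Complex.I * (((1 : ℝ) / (n + 1) : ℝ) : ℂ))
        atTop (nhds x') := by
      have := ((hseqC.const_mul Complex.I).const_sub x')
      simpa using this
    have himpt : ∀ n : ℕ, (x' + Complex.I * (((1 : ℝ) / (n + 1) : ℝ) : ℂ)).im
        = (1 : ℝ) / (n + 1) := by
      intro n
      rw [Complex.add_im, Complex.mul_im, Complex.I_re, Complex.I_im,
        Complex.ofReal_re, Complex.ofReal_im, hx'im]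
      ring
    have himpt' : ∀ n : ℕ, (x' - Complex.I * (((1 : ℝ) / (n + 1) : ℝ) : ℂ)).im
        = -((1 : ℝ) / (n + 1)) := by
      intro n
      rw [Complex.sub_im, Complex.mul_im, Complex.I_re, Complex.I_im,
        Complex.ofReal_re, Complex.ofReal_im, hx'im]
      ring
    have hposn : ∀ n : ℕ, (0 : ℝ) < (1 : ℝ) / (n + 1) := by
      intro n; positivity
    -- upper approach: values have nonnegative imaginary part in the limit
    have hge : 0 ≤ (h x').im := by
      have htt : Tendsto (fun n : ℕ => (h (x' + Complex.I * (((1 : ℝ) / (n + 1) : ℝ) : ℂ))).im)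
          atTop (nhds (h x').im) :=
        (Complex.continuous_im.tendsto _).comp (hcont.tendsto.comp hplus)
      apply ge_of_tendsto' htt
      intro n
      have hmem : x' + Complex.I * (((1 : ℝ) / (n + 1) : ℝ) : ℂ) ∈ UHalf := by
        simp only [UHalf, mem_setOf_eq, himpt n]
        exact hposn n
      rw [heq (hUHsub hmem)]
      exact le_of_lt (D.f_maps hmem).1
    -- lower approach: values have nonpositive imaginary part in the limit
    have hle : (h x').im ≤ 0 := by
      have htt : Tendsto (fun n : ℕ => (h (x' - Complex.I * (((1 : ℝ) / (n + 1) : ℝ) : ℂ))).im)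
          atTop (nhds (h x').im) :=
        (Complex.continuous_im.tendsto _).comp (hcont.tendsto.comp hminus)
      apply le_of_tendsto' htt
      intro n
      have hmem : x' - Complex.I * (((1 : ℝ) / (n + 1) : ℝ) : ℂ) ∈ D.Sᶜ := by
        intro hS
        have := D.S_real hS
        simp only [RLine, mem_setOf_eq, himpt' n] at this
        have := hposn n; linarith
      rw [heq hmem]
      apply L1 _ hmem
      rw [himpt' n]
      have := hposn n; linarith
    linarith
  -- pick a point of S in U
  obtain ⟨x, hxU, hxS'⟩ := Set.exists_of_ssubset hss
  have hxS : x ∈ D.S := not_not.mp hxS'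
  set y := h x with hy
  have hyim : y.im = 0 := L3 x hxU hxS
  -- h is an open map near x
  have hanh : AnalyticAt ℂ h x := hh.analyticAt (hU.mem_nhds hxU)
  have hmap : nhds y ≤ map h (nhds x) := by
    rcases hanh.eventually_constant_or_nhds_le_map_nhds with hconst | hle
    · exfalso
      obtain ⟨ε, hε, hball⟩ := Metric.eventually_nhds_iff.mp hconst
      have hxim : x.im = 0 := D.S_real hxS
      set z₁ := x + Complex.I * ((ε / 2 : ℝ) : ℂ) with hz₁
      set z₂ := x + Complex.I * ((ε / 4 : ℝ) : ℂ) with hz₂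
      have hz₁im : z₁.im = ε / 2 := by
        rw [hz₁, Complex.add_im, Complex.mul_im, Complex.I_re, Complex.I_im,
          Complex.ofReal_re, Complex.ofReal_im, hxim]; ring
      have hz₂im : z₂.im = ε / 4 := by
        rw [hz₂, Complex.add_im, Complex.mul_im, Complex.I_re, Complex.I_im,
          Complex.ofReal_re, Complex.ofReal_im, hxim]; ring
      have hz₁U : z₁ ∈ UHalf := by simp only [UHalf, mem_setOf_eq, hz₁im]; linarith
      have hz₂U : z₂ ∈ UHalf := by simp only [UHalf, mem_setOf_eq, hz₂im]; linarith
      have hd₁ : dist z₁ x < ε := by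
        simp only [hz₁, dist_eq_norm, add_sub_cancel_left]
        rw [norm_mul]
        simp only [Complex.norm_I, Complex.norm_real, Real.norm_eq_abs, one_mul]
        rw [abs_of_pos (by linarith)]
        linarith
      have hd₂ : dist z₂ x < ε := by
        simp only [hz₂, dist_eq_norm, add_sub_cancel_left]
        rw [norm_mul]
        simp only [Complex.norm_I, Complex.norm_real, Real.norm_eq_abs, one_mul]
        rw [abs_of_pos (by linarith)]
        linarith
      have he₁ : D.f z₁ = h x := by rw [← heq (hUHsub hz₁U)]; exact hball hd₁
      have he₂ : D.f z₂ = h x := by rw [← heq (hUHsub hz₂U)]; exact hball hd₂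
      have : z₁ = z₂ := D.f_inj (hUHsub hz₁U) (hUHsub hz₂U) (he₁.trans he₂.symm)
      have : (ε : ℝ) / 2 = ε / 4 := by rw [← hz₁im, ← hz₂im, this]
      linarith
    · exact hle
  -- case split on whether y belongs to the double hull
  by_cases hyK : y ∈ doubleHull D.K
  · -- case B: y ∈ K̂, hence y ∈ closure K; h '' U is a neighborhood of y meeting K
    have hyclK : y ∈ closure D.K := by
      rcases hyK with (hK | hconjK) | hbase
      · exact absurd hyim (by have := D.hull_subset hK; simp only [UHalf, mem_setOf_eq] at this; linarith)
      · obtain ⟨k, hk, hky⟩ := hconjK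
        have hkim := D.hull_subset hk
        simp only [UHalf, mem_setOf_eq] at hkim
        rw [← hky] at hyim
        simp only [Complex.conj_im] at hyim
        linarith
      · exact hbase.1
    have hnbhd : h '' U ∈ nhds y := hmap (image_mem_map (hU.mem_nhds hxU))
    obtain ⟨k, hk1, hk2⟩ := mem_closure_iff_nhds.mp hyclK _ hnbhd
    obtain ⟨z, hzU, hzk⟩ := hk1
    by_cases hzS : z ∈ D.S
    · have h0 := L3 z hzU hzS
      rw [hzk] at h0
      have hk := D.hull_subset hk2
      simp only [UHalf, mem_setOf_eq] at hk
      linarith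
    · have hmem : D.f z ∈ (doubleHull D.K)ᶜ := hmemim z hzS
      rw [← heq hzS] at hmem
      rw [hzk] at hmem
      exact hmem (Or.inl (Or.inl hk2))
  · -- case A: y ∉ K̂, so y = f u for some u ∈ Sᶜ, necessarily u ≠ x
    have : y ∈ D.f '' D.Sᶜ := by rw [D.f_image]; exact hyK
    obtain ⟨u, hu, hfu⟩ := this
    have hux : u ≠ x := fun he => hu (he ▸ hxS)
    set d := dist u x with hd
    have hdpos : 0 < d := dist_pos.mpr hux
    -- f is an open map near u
    have hanf : AnalyticAt ℂ D.f u := D.f_diff.analyticAt (hSo.mem_nhds hu)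
    have hmapf : nhds y ≤ map D.f (nhds u) := by
      rcases hanf.eventually_constant_or_nhds_le_map_nhds with hconst | hle
      · exfalso
        obtain ⟨ε, hε, hball⟩ := Metric.eventually_nhds_iff.mp
          (((hSo.eventually_mem hu).and hconst))
        set z₁ := u + ((ε / 2 : ℝ) : ℂ) with hz₁
        set z₂ := u + ((ε / 4 : ℝ) : ℂ) with hz₂
        have hd₁ : dist z₁ u < ε := by
          simp only [hz₁, dist_eq_norm, add_sub_cancel_left, Complex.norm_real]
          rw [Real.norm_eq_abs, abs_of_pos (by linarith)]; linarith
        have hd₂ : dist z₂ u < ε := by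
          simp only [hz₂, dist_eq_norm, add_sub_cancel_left, Complex.norm_real]
          rw [Real.norm_eq_abs, abs_of_pos (by linarith)]; linarith
        obtain ⟨hz₁S, he₁⟩ := hball hd₁
        obtain ⟨hz₂S, he₂⟩ := hball hd₂
        have : z₁ = z₂ := D.f_inj hz₁S hz₂S (he₁.trans he₂.symm)
        rw [hz₁, hz₂, add_right_inj] at this
        have : (ε : ℝ) / 2 = ε / 4 := by exact_mod_cast Complex.ofReal_inj.mp this
        linarith
      · rw [← hfu]; exact hle
    -- choose small disjoint balls around x and u
    obtain ⟨r₀, hr₀, hball₀⟩ := Metric.isOpen_iff.mp hU x hxU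
    set r := min r₀ (d / 2) with hr
    have hrpos : 0 < r := lt_min hr₀ (by linarith)
    obtain ⟨ρ₀, hρ₀, hballρ⟩ := Metric.isOpen_iff.mp hSo u hu
    set ρ := min ρ₀ (d / 2) with hρ
    have hρpos : 0 < ρ := lt_min hρ₀ (by linarith)
    have hN : h '' Metric.ball x r ∈ nhds y :=
      hmap (image_mem_map (Metric.ball_mem_nhds x hrpos))
    have hM : D.f '' Metric.ball u ρ ∈ nhds y :=
      hmapf (image_mem_map (Metric.ball_mem_nhds u hρpos))
    obtain ⟨ε', hε', hballT⟩ := Metric.mem_nhds_iff.mp (inter_mem hN hM)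
    set w := y + Complex.I * ((ε' / 2 : ℝ) : ℂ) with hw
    have hwim : w.im = ε' / 2 := by
      rw [hw, Complex.add_im, Complex.mul_im, Complex.I_re, Complex.I_im,
        Complex.ofReal_re, Complex.ofReal_im, hyim]; ring
    have hwT : w ∈ h '' Metric.ball x r ∩ D.f '' Metric.ball u ρ := by
      apply hballT
      simp only [Metric.mem_ball, hw, dist_eq_norm, add_sub_cancel_left]
      rw [norm_mul]
      simp only [Complex.norm_I, Complex.norm_real, Real.norm_eq_abs, one_mul]
      rw [abs_of_pos (by linarith)]
      linarith
    obtain ⟨⟨z, hzball, hzw⟩, ⟨v, hvball, hvw⟩⟩ := hwT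
    have hvS : v ∈ D.Sᶜ := hballρ (Metric.ball_subset_ball (min_le_left _ _) hvball)
    have hzU : z ∈ U := hball₀ (Metric.ball_subset_ball (min_le_left _ _) hzball)
    -- w lies in the upper half-plane and outside K, hence w = f a for some a ∈ UHalf
    have hwU : w ∈ UHalf := by simp only [UHalf, mem_setOf_eq, hwim]; linarith
    have hwK : w ∉ D.K := by
      intro hK
      exact (hmemim v hvS) (hvw ▸ Or.inl (Or.inl hK))
    have : w ∈ D.f '' UHalf := himageH ▸ ⟨hwU, hwK⟩
    obtain ⟨a, haU, hfa⟩ := this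
    have hav : a = v := D.f_inj (hUHsub haU) hvS (hfa.trans hvw.symm)
    -- now analyze z
    by_cases hzS : z ∈ D.S
    · have := L3 z hzU hzS
      rw [hzw, hwim] at this
      linarith
    · have hzv : z = v := D.f_inj hzS hvS (by rw [heq hzS] at hzw; rw [hzw, hvw])
      have h1 : dist z x < d / 2 := lt_of_lt_of_le hzball (min_le_right _ _)
      have h2 : dist v u < d / 2 := lt_of_lt_of_le hvball (min_le_right _ _)
      have htri : d ≤ dist u z + dist z x := by rw [hd]; exact dist_triangle u z x
      rw [hzv] at htri h1
      rw [dist_comm] at h2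
      linarith
end

section
/- For any M < ∞, the set of 𝔻-hulls H with dcap(H) ≤ M is compact (in the topology of locally uniform convergence on 𝔻 of the maps f_H). -/
open Set Filter

/-- The open unit disk. -/
noncomputable def UDisk : Set ℂ := Metric.ball 0 1

/-- `f = f_H` is the inverse Loewner map of the `𝔻`-hull `H` with disk capacity `c = dcap H`:
`H` is relatively closed in `𝔻`, `𝔻 ∖ H` is a simply connected domain containing `0`, and `f`
maps `𝔻` conformally onto `𝔻 ∖ H` with `f(0) = 0` and `f'(0) = e^{-c} > 0` (so that
`g_H = f⁻¹` satisfies `g_H(0) = 0`, `g_H'(0) = e^{c}`, `c ≥ 0`). -/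
structure IsDiskLoewnerMapOf (H : Set ℂ) (f : ℂ → ℂ) (c : ℝ) : Prop where
  hull_subset : H ⊆ UDisk
  rel_closed : closure H ∩ UDisk = H
  zero_mem : (0 : ℂ) ∈ UDisk \ H
  simply_connected : SimplyConnectedSpace (UDisk \ H : Set ℂ)
  diff : DifferentiableOn ℂ f UDisk
  inj : InjOn f UDisk
  image : f '' UDisk = UDisk \ H
  map_zero : f 0 = 0
  deriv_zero : deriv f 0 = (Real.exp (-c) : ℝ)
  c_nonneg : 0 ≤ c

open Topology
open scoped Uniformity

lemma isOpen_UDisk : IsOpen UDisk := Metric.isOpen_ball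

lemma mem_UDisk {z : ℂ} : z ∈ UDisk ↔ ‖z‖ < 1 := by
  simp [UDisk, Metric.mem_ball, dist_eq_norm]

lemma zero_mem_UDisk : (0 : ℂ) ∈ UDisk := by simp [mem_UDisk]

/-- Schwarz-type estimate giving equicontinuity. -/
lemma key_estimate {g : ℂ → ℂ} (hg : DifferentiableOn ℂ g UDisk) (hm : MapsTo g UDisk UDisk)
    {x y : ℂ} (hx : x ∈ UDisk) (hy : y ∈ Metric.ball x (1 - ‖x‖)) :
    dist (g y) (g x) ≤ 2 / (1 - ‖x‖) * dist y x := by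
  have hball : Metric.ball x (1 - ‖x‖) ⊆ UDisk := by
    intro z hz
    rw [mem_UDisk]
    have h1 : dist z x < 1 - ‖x‖ := Metric.mem_ball.mp hz
    calc ‖z‖ ≤ ‖x‖ + ‖z - x‖ := norm_le_insert' z x
      _ < ‖x‖ + (1 - ‖x‖) := by have := (dist_eq_norm z x) ▸ h1; linarith [this]
      _ = 1 := by ring
  refine Complex.dist_le_div_mul_dist_of_mapsTo_ball (hg.mono hball) ?_ hy
  intro z hz
  have h1 : ‖g z‖ < 1 := mem_UDisk.mp (hm (hball hz))
  have h2 : ‖g x‖ < 1 := mem_UDisk.mp (hm hx)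
  rw [Metric.mem_closedBall, dist_eq_norm]
  calc ‖g z - g x‖ ≤ ‖g z‖ + ‖g x‖ := norm_sub_le _ _
    _ ≤ 2 := by linarith

lemma equicont {ι : Type*} (G : ι → ℂ → ℂ) (hdiff : ∀ i, DifferentiableOn ℂ (G i) UDisk)
    (hmaps : ∀ i, MapsTo (G i) UDisk UDisk) {K : Set ℂ} (hK : K ⊆ UDisk) :
    EquicontinuousOn G K := by
  intro x hx U hU
  obtain ⟨ε, hε, hU'⟩ := Metric.mem_uniformity_dist.mp hU
  have hx1 : ‖x‖ < 1 := mem_UDisk.mp (hK hx)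
  set R := 1 - ‖x‖ with hR
  have hR0 : 0 < R := by simp only [hR]; linarith
  have hδ : 0 < min R (ε * R / 4) := lt_min hR0 (by positivity)
  refine Filter.Eventually.filter_mono nhdsWithin_le_nhds ?_
  refine Metric.eventually_nhds_iff.mpr ⟨min R (ε * R / 4), hδ, ?_⟩
  intro y hy i
  apply hU'
  have hyb : y ∈ Metric.ball x R := Metric.mem_ball.mpr (lt_of_lt_of_le hy (min_le_left _ _))
  have hle := key_estimate (hdiff i) (hmaps i) (hK hx) hyb
  have hd4 : dist y x < ε * R / 4 := lt_of_lt_of_le hy (min_le_right _ _)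
  have h2R : 0 < 2 / R := by positivity
  calc dist (G i x) (G i y) = dist (G i y) (G i x) := dist_comm _ _
    _ ≤ 2 / R * dist y x := hle
    _ < 2 / R * (ε * R / 4) := by
        apply mul_lt_mul_of_pos_left hd4 h2R
    _ = ε / 2 := by field_simp; ring
    _ < ε := by linarith

lemma montel (f : ℕ → ℂ → ℂ) (hdiff : ∀ n, DifferentiableOn ℂ (f n) UDisk)
    (hmaps : ∀ n, MapsTo (f n) UDisk UDisk) :
    ∃ φ : ℕ → ℕ, StrictMono φ ∧ ∃ fl : ℂ → ℂ,
      TendstoLocallyUniformlyOn (fun k => f (φ k)) fl atTop UDisk := by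
  classical
  set Kc : ℕ → Set ℂ := fun n => Metric.closedBall (0 : ℂ) (1 - 1 / (n + 2)) with hKc
  set 𝔖 : Set (Set ℂ) := Set.range Kc with h𝔖
  have hrpos : ∀ n : ℕ, (0 : ℝ) < 1 - 1 / (n + 2) := by
    intro n
    have h2 : (1 : ℝ) < (n : ℝ) + 2 := by have : (0:ℝ) ≤ (n:ℝ) := Nat.cast_nonneg n; linarith
    have : 1 / ((n : ℝ) + 2) < 1 := by
      rw [div_lt_one (by positivity)]; exact h2
    linarith
  have hrlt : ∀ n : ℕ, (1 - 1 / ((n : ℝ) + 2)) < 1 := by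
    intro n
    have : (0 : ℝ) < 1 / ((n : ℝ) + 2) := by positivity
    linarith
  have hKU : ∀ n, Kc n ⊆ UDisk := fun n => Metric.closedBall_subset_ball (hrlt n)
  have 𝔖_compact : ∀ K ∈ 𝔖, IsCompact K := by
    rintro K ⟨n, rfl⟩; exact isCompact_closedBall _ _
  have hmono : Monotone Kc := by
    intro m n hmn
    apply Metric.closedBall_subset_closedBall
    have h1 : (m : ℝ) + 2 ≤ (n : ℝ) + 2 := by
      have : (m : ℝ) ≤ n := Nat.cast_le.mpr hmn
      linarith
    have := one_div_le_one_div_of_le (by positivity : (0:ℝ) < (m : ℝ) + 2) h1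
    linarith
  haveI : IsCountablyGenerated (𝓤 (UniformOnFun ℂ ℂ 𝔖)) :=
    UniformOnFun.isCountablyGenerated_uniformity (𝔖 := 𝔖) (t := Kc)
      (ht := fun n => Set.mem_range_self n) (hmono := hmono)
      (hex := by rintro S ⟨n, rfl⟩; exact ⟨n, subset_rfl⟩)
  set s : Set (UniformOnFun ℂ ℂ 𝔖) := Set.range (fun n => UniformOnFun.ofFun 𝔖 (f n)) with hs
  have hcl : IsCompact (closure s) := by
    refine ArzelaAscoli.isCompact_closure_of_isClosedEmbedding (F := UniformOnFun.toFun 𝔖)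
      𝔖_compact ?_ ?_ ?_
    · exact IsClosedEmbedding.id
    · rintro K ⟨n, rfl⟩
      refine equicont _ ?_ ?_ (hKU n)
      · rintro ⟨g, hg⟩
        obtain ⟨m, rfl⟩ := hg
        exact hdiff m
      · rintro ⟨g, hg⟩
        obtain ⟨m, rfl⟩ := hg
        exact hmaps m
    · rintro K ⟨n, rfl⟩ x hx
      refine ⟨Metric.closedBall 0 1, isCompact_closedBall _ _, ?_⟩
      rintro i ⟨m, rfl⟩
      have : f m x ∈ UDisk := hmaps m (hKU n hx)
      exact Metric.ball_subset_closedBall this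
  have hmem : ∀ n, UniformOnFun.ofFun 𝔖 (f n) ∈ closure s := fun n => subset_closure ⟨n, rfl⟩
  obtain ⟨a, -, φ, hφ, hconv⟩ := hcl.isSeqCompact hmem
  refine ⟨φ, hφ, UniformOnFun.toFun 𝔖 a, ?_⟩
  have huni : ∀ S ∈ 𝔖, TendstoUniformlyOn (fun k => f (φ k)) (UniformOnFun.toFun 𝔖 a) atTop S :=
    UniformOnFun.tendsto_iff_tendstoUniformlyOn.mp hconv
  rw [tendstoLocallyUniformlyOn_iff_forall_isCompact isOpen_UDisk]
  intro K hKsub hKcomp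
  rcases K.eq_empty_or_nonempty with rfl | hne
  · simp [TendstoUniformlyOn]
  obtain ⟨z0, hz0K, hz0max⟩ := hKcomp.exists_isMaxOn hne continuous_norm.continuousOn
  have hz01 : ‖z0‖ < 1 := mem_UDisk.mp (hKsub hz0K)
  obtain ⟨m, hm⟩ := exists_nat_one_div_lt (show (0:ℝ) < 1 - ‖z0‖ by linarith)
  have hsub : K ⊆ Kc m := by
    intro z hz
    have h1 : ‖z‖ ≤ ‖z0‖ := hz0max hz
    have h2 : 1 / ((m : ℝ) + 2) < 1 / ((m : ℝ) + 1) := by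
      apply one_div_lt_one_div_of_lt (by positivity)
      linarith
    have h3 : (1 : ℝ) / (m + 1) < 1 - ‖z0‖ := hm
    simp only [hKc, Metric.mem_closedBall, dist_zero_right]
    push_cast at h2 h3 ⊢
    linarith
  exact (huni _ ⟨m, rfl⟩).mono hsub

lemma not_const_of_deriv_ne {fl : ℂ → ℂ} (hne : deriv fl 0 ≠ 0) (w : ℂ) :
    ¬ Set.EqOn fl (fun _ => w) UDisk := by
  intro hEq
  apply hne
  have hev : fl =ᶠ[nhds 0] (fun _ => w) :=
    Filter.eventuallyEq_of_mem (isOpen_UDisk.mem_nhds zero_mem_UDisk) hEq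
  rw [hev.deriv_eq, deriv_const]

lemma hurwitz_injOn (F : ℕ → ℂ → ℂ) (fl : ℂ → ℂ)
    (hdiff : ∀ k, DifferentiableOn ℂ (F k) UDisk)
    (hinj : ∀ k, InjOn (F k) UDisk)
    (hlu : TendstoLocallyUniformlyOn F fl atTop UDisk)
    (hfl_diff : DifferentiableOn ℂ fl UDisk)
    (hconst : ∀ w : ℂ, ¬ Set.EqOn fl (fun _ => w) UDisk) :
    InjOn fl UDisk := by
  intro a ha b hb hab
  by_contra hne_ab
  set w := fl b with hw
  have hana : AnalyticOnNhd ℂ fl UDisk := hfl_diff.analyticOnNhd isOpen_UDisk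
  have hana_a : AnalyticAt ℂ (fun z => fl z - w) a := (hana a ha).sub analyticAt_const
  rcases hana_a.eventually_eq_zero_or_eventually_ne_zero with h1 | h2
  · -- fl locally constant near a, contradiction via identity theorem
    refine hconst w ?_
    have hpre : IsPreconnected UDisk := by
      unfold UDisk; exact (convex_ball (0:ℂ) 1).isPreconnected
    refine hana.eqOn_of_preconnected_of_eventuallyEq (analyticOnNhd_const) hpre ha ?_
    filter_upwards [h1] with z hz
    simpa [sub_eq_zero] using hz
  · -- fl z ≠ w on a punctured neighborhood of a
    rw [eventually_nhdsWithin_iff] at h2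
    obtain ⟨ε, hε, hball⟩ := Metric.eventually_nhds_iff.mp h2
    have hab_pos : 0 < dist a b := dist_pos.mpr hne_ab
    have ha1 : ‖a‖ < 1 := mem_UDisk.mp ha
    set ρ := min (min (ε / 2) (dist a b / 2)) ((1 - ‖a‖) / 2) with hρdef
    have hρ : 0 < ρ := by
      apply lt_min (lt_min (by linarith) (by linarith)); linarith
    have hρε : ρ < ε := lt_of_le_of_lt ((min_le_left _ _).trans (min_le_left _ _)) (by linarith)
    have hρb : b ∉ Metric.closedBall a ρ := by
      intro hmem
      have h1 : dist b a ≤ ρ := Metric.mem_closedBall.mp hmem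
      have h2 : ρ ≤ dist a b / 2 := (min_le_left _ _).trans (min_le_right _ _)
      rw [dist_comm] at h1
      linarith
    have hρD : Metric.closedBall a ρ ⊆ UDisk := by
      intro z hz
      have h1 : dist z a ≤ ρ := Metric.mem_closedBall.mp hz
      have h2 : ρ ≤ (1 - ‖a‖) / 2 := min_le_right _ _
      rw [mem_UDisk]
      calc ‖z‖ ≤ ‖a‖ + ‖z - a‖ := norm_le_insert' z a
        _ = ‖a‖ + dist z a := by rw [dist_eq_norm]
        _ ≤ ‖a‖ + (1 - ‖a‖) / 2 := by linarith
        _ < 1 := by linarith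
    -- minimum of ‖fl z - w‖ on the sphere
    have hsne : (Metric.sphere a ρ).Nonempty := NormedSpace.sphere_nonempty.mpr hρ.le
    have hsub_sph : Metric.sphere a ρ ⊆ UDisk :=
      Metric.sphere_subset_closedBall.trans hρD
    have hcont : ContinuousOn (fun z => ‖fl z - w‖) (Metric.sphere a ρ) :=
      ((hfl_diff.continuousOn.mono hsub_sph).sub continuousOn_const).norm
    obtain ⟨z1, hz1, hz1min⟩ := (isCompact_sphere a ρ).exists_isMinOn hsne hcont
    set δ := ‖fl z1 - w‖ with hδdef
    have hδ : 0 < δ := by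
      have hz1a : z1 ≠ a := by
        intro h
        have : dist z1 a = ρ := Metric.mem_sphere.mp hz1
        rw [h] at this; simp at this; exact hρ.ne' this.symm
      have : fl z1 ≠ w := by
        rw [← sub_ne_zero]
        apply hball ?_ hz1a
        have : dist z1 a = ρ := Metric.mem_sphere.mp hz1
        rw [this]; exact hρε
      simpa [hδdef, norm_pos_iff, sub_ne_zero] using this
    -- choose a good index k
    have hUconv : TendstoUniformlyOn F fl atTop (Metric.closedBall a ρ) :=
      (tendstoLocallyUniformlyOn_iff_forall_isCompact isOpen_UDisk).mp hlu _ hρD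
        (isCompact_closedBall _ _)
    have hev1 : ∀ᶠ k in atTop, ∀ z ∈ Metric.closedBall a ρ, dist (fl z) (F k z) < δ / 5 :=
      Metric.tendstoUniformlyOn_iff.mp hUconv (δ / 5) (by positivity)
    have hev2 : ∀ᶠ k in atTop, dist (F k b) w < δ / 5 :=
      Metric.tendsto_nhds.mp (hlu.tendsto_at hb) (δ / 5) (by positivity)
    obtain ⟨k, hk1, hk2⟩ := (hev1.and hev2).exists
    set g := fun z => F k z - F k b with hg
    have hgne : ∀ z ∈ Metric.closedBall a ρ, g z ≠ 0 := by
      intro z hz h0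
      have hzb : z ≠ b := fun h => hρb (h ▸ hz)
      exact hzb ((hinj k) (hρD hz) hb (sub_eq_zero.mp h0))
    have hsph_bound : ∀ z ∈ Metric.sphere a ρ, 3 * δ / 5 ≤ ‖g z‖ := by
      intro z hz
      have hzD : z ∈ Metric.closedBall a ρ := Metric.sphere_subset_closedBall hz
      have h1 : δ ≤ ‖fl z - w‖ := hz1min hz
      have h2 : ‖fl z - F k z‖ < δ / 5 := by
        rw [← dist_eq_norm]; exact hk1 z hzD
      have h3 : ‖F k b - w‖ < δ / 5 := by rw [← dist_eq_norm]; exact hk2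
      have hsplit : fl z - w = g z + (fl z - F k z) + (F k b - w) := by
        simp only [hg]; ring
      have h4 : ‖fl z - w‖ ≤ ‖g z‖ + ‖fl z - F k z‖ + ‖F k b - w‖ := by
        rw [hsplit]; exact norm_add₃_le
      linarith
    -- maximum modulus for 1/g on the ball
    have hgd : DifferentiableOn ℂ g UDisk := (hdiff k).sub (differentiableOn_const _)
    have hdc : DiffContOnCl ℂ (fun z => (g z)⁻¹) (Metric.ball a ρ) := by
      constructor
      · exact ((hgd.mono ((Metric.ball_subset_closedBall).trans hρD)).inv
          (fun x hx => hgne x (Metric.ball_subset_closedBall hx)))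
      · rw [closure_ball a hρ.ne']
        exact ((hgd.continuousOn.mono hρD).inv₀ hgne)
    have hbound : ‖(g a)⁻¹‖ ≤ (3 * δ / 5)⁻¹ := by
      refine Complex.norm_le_of_forall_mem_frontier_norm_le Metric.isBounded_ball hdc ?_ ?_
      · intro z hz
        rw [frontier_ball a hρ.ne'] at hz
        rw [norm_inv]
        exact inv_anti₀ (by positivity) (hsph_bound z hz)
      · rw [closure_ball a hρ.ne']
        exact Metric.mem_closedBall_self hρ.le
    have hga_pos : 0 < ‖g a‖ :=
      norm_pos_iff.mpr (hgne a (Metric.mem_closedBall_self hρ.le))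
    rw [norm_inv] at hbound
    have hga : 3 * δ / 5 ≤ ‖g a‖ := by
      have := inv_anti₀ (inv_pos.mpr hga_pos) hbound
      simpa using this
    have h5 : ‖g a‖ < 2 * δ / 5 := by
      have h6 : ‖F k a - w‖ < δ / 5 := by
        rw [← hab, ← dist_eq_norm, dist_comm]
        exact hk1 a (Metric.mem_closedBall_self hρ.le)
      have h7 : ‖F k b - w‖ < δ / 5 := by rw [← dist_eq_norm]; exact hk2
      have hsplit : g a = (F k a - w) - (F k b - w) := by simp only [hg]; ring
      calc ‖g a‖ ≤ ‖F k a - w‖ + ‖F k b - w‖ := by rw [hsplit]; exact norm_sub_le _ _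
        _ < 2 * δ / 5 := by linarith
    linarith

lemma isPreconnected_UDisk : IsPreconnected UDisk := by
  unfold UDisk; exact (convex_ball (0:ℂ) 1).isPreconnected

/-- Compactness of the set of `𝔻`-hulls of capacity at most `M` (in the topology of locally
uniform convergence of the maps `f_H` on `𝔻`), in sequential form. -/
theorem disk_hulls_bounded_dcap_compact (M : ℝ)
    (H : ℕ → Set ℂ) (f : ℕ → ℂ → ℂ) (c : ℕ → ℝ)
    (hd : ∀ n, IsDiskLoewnerMapOf (H n) (f n) (c n)) (hM : ∀ n, c n ≤ M) :
    ∃ φ : ℕ → ℕ, StrictMono φ ∧ ∃ (Hl : Set ℂ) (fl : ℂ → ℂ) (cl : ℝ),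
      IsDiskLoewnerMapOf Hl fl cl ∧ cl ≤ M ∧
      TendstoLocallyUniformlyOn (fun k => f (φ k)) fl Filter.atTop UDisk := by
  have hdiff : ∀ n, DifferentiableOn ℂ (f n) UDisk := fun n => (hd n).diff
  have hmaps : ∀ n, MapsTo (f n) UDisk UDisk := by
    intro n z hz
    have h1 : f n z ∈ f n '' UDisk := mem_image_of_mem _ hz
    rw [(hd n).image] at h1
    exact h1.1
  -- Bolzano–Weierstrass for the capacities
  obtain ⟨cl, hclmem, ψ, hψ, hcconv⟩ :=
    tendsto_subseq_of_bounded (Metric.isBounded_Icc (0:ℝ) M)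
      (x := c) (fun n => ⟨(hd n).c_nonneg, hM n⟩)
  rw [isClosed_Icc.closure_eq] at hclmem
  -- Montel for the subsequence
  obtain ⟨φ2, hφ2, fl, hlu⟩ := montel (fun k => f (ψ k)) (fun k => hdiff _) (fun k => hmaps _)
  refine ⟨ψ ∘ φ2, hψ.comp hφ2, ?_⟩
  set φ : ℕ → ℕ := ψ ∘ φ2 with hφdef
  have hlu' : TendstoLocallyUniformlyOn (fun k => f (φ k)) fl atTop UDisk := hlu
  have hcconv' : Tendsto (fun k => c (φ k)) atTop (𝓝 cl) := hcconv.comp hφ2.tendsto_atTop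
  -- basic properties of the limit
  have hfl_diff : DifferentiableOn ℂ fl UDisk :=
    hlu'.differentiableOn (Eventually.of_forall fun k => hdiff _) isOpen_UDisk
  have hpt : ∀ z ∈ UDisk, Tendsto (fun k => f (φ k) z) atTop (𝓝 (fl z)) :=
    fun z hz => hlu'.tendsto_at hz
  have hfl0 : fl 0 = 0 := by
    have h1 := hpt 0 zero_mem_UDisk
    have h2 : (fun k => f (φ k) 0) = fun _ => (0 : ℂ) := funext fun k => (hd (φ k)).map_zero
    rw [h2] at h1
    exact tendsto_nhds_unique h1 tendsto_const_nhds
  have hderiv_tend : Tendsto (fun k => deriv (f (φ k)) 0) atTop (𝓝 (deriv fl 0)) :=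
    (hlu'.deriv (Eventually.of_forall fun k => hdiff _) isOpen_UDisk).tendsto_at zero_mem_UDisk
  have hderiv_tend2 :
      Tendsto (fun k => deriv (f (φ k)) 0) atTop (𝓝 ((Real.exp (-cl) : ℝ) : ℂ)) := by
    have h1 : Tendsto (fun k => Real.exp (-(c (φ k)))) atTop (𝓝 (Real.exp (-cl))) :=
      (Real.continuous_exp.tendsto _).comp hcconv'.neg
    have h2 : Tendsto (fun k => ((Real.exp (-(c (φ k))) : ℝ) : ℂ)) atTop
        (𝓝 ((Real.exp (-cl) : ℝ) : ℂ)) := (Complex.continuous_ofReal.tendsto _).comp h1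
    have h3 : (fun k => deriv (f (φ k)) 0) = fun k => ((Real.exp (-(c (φ k))) : ℝ) : ℂ) :=
      funext fun k => (hd (φ k)).deriv_zero
    rw [h3]
    exact h2
  have hderiv0 : deriv fl 0 = ((Real.exp (-cl) : ℝ) : ℂ) :=
    tendsto_nhds_unique hderiv_tend hderiv_tend2
  have hdne : deriv fl 0 ≠ 0 := by
    rw [hderiv0]
    exact Complex.ofReal_ne_zero.mpr (Real.exp_ne_zero _)
  have hconst := not_const_of_deriv_ne hdne
  -- the limit maps the disk into the disk
  have hmapsl : MapsTo fl UDisk UDisk := by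
    have hle : ∀ z ∈ UDisk, ‖fl z‖ ≤ 1 := by
      intro z hz
      refine le_of_tendsto (hpt z hz).norm
        (Eventually.of_forall fun k => (mem_UDisk.mp (hmaps _ hz)).le)
    intro z hz
    rw [mem_UDisk]
    rcases lt_or_ge ‖fl z‖ 1 with h | h
    · exact h
    · exfalso
      have heq : ‖fl z‖ = 1 := le_antisymm (hle z hz) h
      have hmax : IsMaxOn (norm ∘ fl) UDisk z := by
        refine isMaxOn_iff.mpr fun y hy => ?_
        simp only [Function.comp_apply]
        rw [heq]
        exact hle y hy
      exact hconst (fl z)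
        (Complex.eqOn_of_isPreconnected_of_isMaxOn_norm isPreconnected_UDisk isOpen_UDisk
          hfl_diff hz hmax)
  -- injectivity of the limit (Hurwitz)
  have hinj : InjOn fl UDisk :=
    hurwitz_injOn (fun k => f (φ k)) fl (fun k => hdiff _) (fun k => (hd _).inj) hlu'
      hfl_diff hconst
  -- the image is open
  have hana : AnalyticOnNhd ℂ fl UDisk := hfl_diff.analyticOnNhd isOpen_UDisk
  have hopen : ∀ s ⊆ UDisk, IsOpen s → IsOpen (fl '' s) := by
    rcases hana.is_constant_or_isOpen isPreconnected_UDisk with ⟨w, hw⟩ | h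
    · exact absurd (fun z hz => hw z hz) (hconst w)
    · exact h
  set O : Set ℂ := fl '' UDisk with hO
  have hOopen : IsOpen O := hopen UDisk subset_rfl isOpen_UDisk
  have hOsub : O ⊆ UDisk := hmapsl.image_subset
  have hset : UDisk \ (UDisk \ O) = O := diff_diff_cancel_left hOsub
  refine ⟨UDisk \ O, fl, cl, ⟨diff_subset, ?_, ?_, ?_, hfl_diff, hinj, hset.symm, hfl0,
    hderiv0, hclmem.1⟩, hclmem.2, hlu'⟩
  · -- relatively closed
    apply subset_antisymm
    · intro z hz
      refine ⟨hz.2, fun hzO => ?_⟩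
      have hcl2 : closure (UDisk \ O) ⊆ Oᶜ :=
        closure_minimal (fun y hy => hy.2) (isClosed_compl_iff.mpr hOopen)
      exact hcl2 hz.1 hzO
    · exact fun z hz => ⟨subset_closure hz, hz.1⟩
  · -- zero membership
    exact ⟨zero_mem_UDisk, fun h => h.2 ⟨0, zero_mem_UDisk, hfl0⟩⟩
  · -- simple connectivity
    rw [hset]
    have hconvU : Convex ℝ UDisk := by unfold UDisk; exact convex_ball 0 1
    haveI hcontr : ContractibleSpace UDisk := hconvU.contractibleSpace ⟨0, zero_mem_UDisk⟩
    have hcont : Continuous fun x : UDisk => fl x := hfl_diff.continuousOn.restrict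
    set e : UDisk ≃ ↥O := Equiv.Set.imageOfInjOn fl UDisk hinj with he
    have hecont : Continuous e := Continuous.subtype_mk hcont _
    have heopen : IsOpenMap e := by
      intro u hu
      rw [hOopen.isOpenEmbedding_subtypeVal.isOpen_iff_image_isOpen]
      have himg : Subtype.val '' (e '' u) = fl '' (Subtype.val '' u) := by
        ext y
        constructor
        · rintro ⟨y', ⟨x, hx, rfl⟩, rfl⟩
          exact ⟨x, ⟨x, hx, rfl⟩, rfl⟩
        · rintro ⟨x', ⟨x, hx, rfl⟩, rfl⟩
          exact ⟨e x, ⟨x, hx, rfl⟩, rfl⟩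
      rw [himg]
      exact hopen _ (by rintro y ⟨x, hx, rfl⟩; exact x.2)
        (isOpen_UDisk.isOpenMap_subtype_val u hu)
    haveI : ContractibleSpace ↥O :=
      (Equiv.toHomeomorphOfContinuousOpen e hecont heopen).symm.contractibleSpace
    infer_instance
end
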